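/- arXiv:2410.20854 — 6 statements merged into one kernel-verified Lean document; each statement's English description precedes it below -/
import Mathlib

section
/- For k ∈ ℕ≥1 and μ > 0, the integral ∫₀^{1/2} (s(1−s))^{(1−k)/k} · |w| / (1 + μ^{2k}|w|^{2k} s²) ds is bounded above by (2^{(k−1)/k}/μ) · π / (2 cos(π(k−1)/(2k))), uniformly in w ∈ ℂ. -/
open Real Set MeasureTheory

private lemma beta_val {p : ℝ} (hp : 0 < p) (hp1 : p < 1) :
    (∫ x in Ioo (0:ℝ) 1, x ^ (p - 1) * (1 - x) ^ (-p)) = π / Real.sin (π * p) ∧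
    IntegrableOn (fun x : ℝ => x ^ (p - 1) * (1 - x) ^ (-p)) (Ioo (0:ℝ) 1) := by
  have hq : (0:ℝ) < 1 - p := by linarith
  have heq : ∀ x ∈ Icc (0:ℝ) 1,
      ((x ^ (p - 1) * (1 - x) ^ (-p) : ℝ) : ℂ)
        = (x:ℂ) ^ ((p:ℂ) - 1) * ((1:ℂ) - x) ^ ((1 - (p:ℂ)) - 1) := by
    intro x hx
    have hx0 : (0:ℝ) ≤ x := hx.1
    have hx1 : (0:ℝ) ≤ 1 - x := by linarith [hx.2]
    push_cast [Complex.ofReal_cpow hx0, Complex.ofReal_cpow hx1]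
    norm_num
  -- complex beta value
  have hbeta : Complex.betaIntegral p (1 - p) = (π / Real.sin (π * p) : ℝ) := by
    have h1 : Complex.Gamma p * Complex.Gamma (1 - p)
        = Complex.Gamma ((p : ℂ) + (1 - p)) * Complex.betaIntegral p (1 - p) := by
      apply Complex.Gamma_mul_Gamma_eq_betaIntegral
      · simpa using hp
      · simpa using hq
    have h2 : Complex.Gamma p * Complex.Gamma (1 - (p:ℂ)) = π / Complex.sin (π * p) :=
      Complex.Gamma_mul_Gamma_one_sub p
    rw [show ((p:ℂ) + (1 - p)) = 1 by push_cast; ring, Complex.Gamma_one, one_mul] at h1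
    rw [show ((1:ℂ) - p) = ((1 - p : ℝ) : ℂ) by push_cast; ring] at h2
    rw [← h1, show ((1:ℂ) - (p:ℂ)) = ((1 - p : ℝ) : ℂ) by push_cast; ring, h2]
    push_cast [Complex.ofReal_sin]
    norm_num
  have hcoe : Complex.betaIntegral p (1 - p)
      = ((∫ x in (0:ℝ)..1, x ^ (p - 1) * (1 - x) ^ (-p) : ℝ) : ℂ) := by
    rw [Complex.betaIntegral, ← intervalIntegral.integral_ofReal]
    apply intervalIntegral.integral_congr
    intro x hx
    rw [uIcc_of_le (by norm_num : (0:ℝ) ≤ 1)] at hx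
    exact (heq x hx).symm
  have hval : (∫ x in (0:ℝ)..1, x ^ (p - 1) * (1 - x) ^ (-p)) = π / Real.sin (π * p) := by
    have := hcoe.symm.trans hbeta
    exact_mod_cast this
  have hint : IntegrableOn (fun x : ℝ => x ^ (p - 1) * (1 - x) ^ (-p)) (Ioc (0:ℝ) 1) := by
    have hc := (Complex.betaIntegral_convergent (u := (p:ℂ)) (v := (1 - (p:ℂ)))
      (by simpa using hp) (by simpa using hq))
    rw [intervalIntegrable_iff_integrableOn_Ioc_of_le (by norm_num : (0:ℝ) ≤ 1)] at hc
    have hc2 : IntegrableOn (fun x : ℝ => ((x ^ (p - 1) * (1 - x) ^ (-p) : ℝ) : ℂ))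
        (Ioc (0:ℝ) 1) := by
      apply hc.congr_fun _ measurableSet_Ioc
      intro x hx
      exact (heq x (Ioc_subset_Icc_self hx)).symm
    have h3 : IntegrableOn (fun x : ℝ =>
        Complex.re ((x ^ (p - 1) * (1 - x) ^ (-p) : ℝ) : ℂ)) (Ioc (0:ℝ) 1) := hc2.re
    apply h3.congr_fun _ measurableSet_Ioc
    intro x hx
    simp
  constructor
  · rw [← hval, intervalIntegral.integral_of_le (by norm_num : (0:ℝ) ≤ 1),
      ← integral_Ioc_eq_integral_Ioo]
  · exact hint.mono_set Ioo_subset_Ioc_self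

private lemma key_val {a : ℝ} (ha : 0 < a) (ha2 : a < 2) :
    (∫ u in Ioi (0:ℝ), u ^ (a - 1) / (1 + u ^ 2)) = π / (2 * Real.sin (π * a / 2)) ∧
    IntegrableOn (fun u : ℝ => u ^ (a - 1) / (1 + u ^ 2)) (Ioi (0:ℝ)) := by
  have hp : 0 < a / 2 := by linarith
  have hp1 : a / 2 < 1 := by linarith
  obtain ⟨hBval, hBint⟩ := beta_val hp hp1
  set φ : ℝ → ℝ := fun u => u ^ 2 / (1 + u ^ 2) with hφ
  set φ' : ℝ → ℝ := fun u => 2 * u / (1 + u ^ 2) ^ 2 with hφ'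
  set g : ℝ → ℝ := fun x => x ^ (a / 2 - 1) * (1 - x) ^ (-(a / 2)) with hg
  have hpos : ∀ u : ℝ, (0:ℝ) < 1 + u ^ 2 := fun u => by positivity
  have hderiv : ∀ u ∈ Ioi (0:ℝ), HasDerivWithinAt φ (φ' u) (Ioi 0) u := by
    intro u hu
    have h := (hasDerivAt_pow 2 u).div ((hasDerivAt_pow 2 u).const_add 1) (hpos u).ne'
    have : (↑2 * u ^ (2 - 1) * (1 + u ^ 2) - u ^ 2 * (↑2 * u ^ (2 - 1))) / (1 + u ^ 2) ^ 2
        = φ' u := by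
      simp only [hφ']
      field_simp
      ring
    exact (this ▸ h).hasDerivWithinAt
  have hinj : InjOn φ (Ioi (0:ℝ)) := by
    have : StrictMonoOn φ (Ioi (0:ℝ)) := by
      intro u hu v hv huv
      simp only [hφ]
      rw [div_lt_div_iff₀ (hpos u) (hpos v)]
      have h2 : u ^ 2 < v ^ 2 := by nlinarith [mem_Ioi.mp hu, mem_Ioi.mp hv]
      nlinarith
    exact this.injOn
  have himg : φ '' Ioi (0:ℝ) = Ioo (0:ℝ) 1 := by
    ext x
    constructor
    · rintro ⟨u, hu, rfl⟩
      have hu' : (0:ℝ) < u := hu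
      constructor
      · positivity
      · rw [div_lt_one (hpos u)]; nlinarith
    · rintro ⟨hx0, hx1⟩
      refine ⟨Real.sqrt (x / (1 - x)), ?_, ?_⟩
      · have : 0 < x / (1 - x) := by
          apply div_pos hx0; linarith
        exact Real.sqrt_pos.mpr this
      · have h1x : (0:ℝ) < 1 - x := by linarith
        have hsq : Real.sqrt (x / (1 - x)) ^ 2 = x / (1 - x) :=
          Real.sq_sqrt (by positivity)
        simp only [hφ, hsq]
        field_simp
        ring
  have hcov := integral_image_eq_integral_abs_deriv_smul measurableSet_Ioi hderiv hinj g
  have hcovint := (integrableOn_image_iff_integrableOn_abs_deriv_smul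
    measurableSet_Ioi hderiv hinj g).mp (by rw [himg]; exact hBint)
  rw [himg] at hcov
  have hptw : ∀ u ∈ Ioi (0:ℝ), |φ' u| • g (φ u) = 2 * (u ^ (a - 1) / (1 + u ^ 2)) := by
    intro u hu
    have hu' : (0:ℝ) < u := hu
    have h1 := hpos u
    have e1 : (1:ℝ) - u ^ 2 / (1 + u ^ 2) = (1 + u ^ 2)⁻¹ := by field_simp; ring
    have hu2 : ((u ^ 2 : ℝ)) ^ (a / 2 - 1) = u ^ (a - 2) := by
      rw [← Real.rpow_natCast u 2, ← Real.rpow_mul hu'.le]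
      congr 1
      push_cast
      ring
    have e2 : (u ^ 2 / (1 + u ^ 2)) ^ (a / 2 - 1)
        = u ^ (a - 2) * (1 + u ^ 2) ^ (1 - a / 2) := by
      rw [Real.div_rpow (by positivity) h1.le, hu2, div_eq_mul_inv,
        ← Real.rpow_neg h1.le, show -(a / 2 - 1) = 1 - a / 2 by ring]
    have e3 : ((1 + u ^ 2)⁻¹) ^ (-(a / 2)) = (1 + u ^ 2) ^ (a / 2) := by
      rw [Real.inv_rpow h1.le, Real.rpow_neg h1.le, inv_inv]
    have e4 : (1 + u ^ 2) ^ (1 - a / 2) * (1 + u ^ 2) ^ (a / 2) = 1 + u ^ 2 := by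
      rw [← Real.rpow_add h1, show (1:ℝ) - a / 2 + a / 2 = 1 by ring, Real.rpow_one]
    have e5 : u * u ^ (a - 2) = u ^ (a - 1) := by
      nth_rewrite 1 [← Real.rpow_one u]
      rw [← Real.rpow_add hu']
      congr 1
      ring
    have habs : |φ' u| = 2 * u / (1 + u ^ 2) ^ 2 := by
      apply abs_of_pos; positivity
    simp only [hg, hφ, smul_eq_mul, habs, e1, e2, e3]
    rw [mul_assoc (u ^ (a - 2)), e4]
    field_simp
    rw [← e5]
  have hval2 : (∫ u in Ioi (0:ℝ), |φ' u| • g (φ u))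
      = ∫ u in Ioi (0:ℝ), 2 * (u ^ (a - 1) / (1 + u ^ 2)) := by
    apply setIntegral_congr_fun measurableSet_Ioi hptw
  have hint2 : IntegrableOn (fun u : ℝ => 2 * (u ^ (a - 1) / (1 + u ^ 2))) (Ioi (0:ℝ)) :=
    hcovint.congr_fun hptw measurableSet_Ioi
  have hsin : Real.sin (π * (a / 2)) = Real.sin (π * a / 2) := by ring_nf
  have hsinpos : 0 < Real.sin (π * a / 2) := by
    apply Real.sin_pos_of_pos_of_lt_pi
    · have := Real.pi_pos; positivity
    · nlinarith [Real.pi_pos]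
  constructor
  · have h2 : 2 * ∫ u in Ioi (0:ℝ), u ^ (a - 1) / (1 + u ^ 2) = π / Real.sin (π * a / 2) := by
      rw [← MeasureTheory.integral_const_mul, ← hval2, ← hcov, hBval, hsin]
    have h3 : π / (2 * Real.sin (π * a / 2)) = (π / Real.sin (π * a / 2)) / 2 := by ring
    rw [h3]
    linarith [h2]
  · have h4 : IntegrableOn (fun x : ℝ => (2:ℝ)⁻¹ * (2 * (x ^ (a - 1) / (1 + x ^ 2))))
        (Ioi (0:ℝ)) := hint2.const_mul _
    apply h4.congr_fun _ measurableSet_Ioi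
    intro x hx
    dsimp only
    ring

/-- Kernel integral bound:
`∫₀^(1/2) (s(1−s))^((1−k)/k) |w| / (1 + μ^(2k)|w|^(2k) s²) ds
  ≤ (2^((k−1)/k)/μ) · π/(2 cos(π(k−1)/(2k)))`, uniformly in `w ∈ ℂ`. -/
theorem stmt_5 (k : ℕ) (hk : 1 ≤ k) (μ : ℝ) (hμ : 0 < μ) (w : ℂ) :
    (∫ s in Ioo (0 : ℝ) (1 / 2),
        (s * (1 - s)) ^ (((1 : ℝ) - k) / k) * ‖w‖ / (1 + μ ^ (2 * k) * ‖w‖ ^ (2 * k) * s ^ 2))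
      ≤ ((2 : ℝ) ^ (((k : ℝ) - 1) / k) / μ) * (π / (2 * Real.cos (π * ((k : ℝ) - 1) / (2 * k)))) := by
  have hk0 : (0:ℝ) < k := by exact_mod_cast hk
  set a : ℝ := 1 / (k:ℝ) with haa
  have ha : 0 < a := by positivity
  have ha1 : a ≤ 1 := by
    rw [haa, div_le_one hk0]; exact_mod_cast hk
  have ha2 : a < 2 := by linarith
  obtain ⟨hIval, hIint⟩ := key_val ha ha2
  have hE : ((1:ℝ) - k) / k = a - 1 := by rw [haa]; field_simp
  have hE2 : ((k:ℝ) - 1) / k = 1 - a := by rw [haa]; field_simp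
  have hcos : Real.cos (π * ((k:ℝ) - 1) / (2 * k)) = Real.sin (π * a / 2) := by
    rw [← Real.cos_pi_div_two_sub]
    congr 1
    rw [haa]
    field_simp
  have hsinpos : 0 < Real.sin (π * a / 2) := by
    apply Real.sin_pos_of_pos_of_lt_pi
    · have := Real.pi_pos; positivity
    · nlinarith [Real.pi_pos]
  rw [hcos]
  by_cases hw : w = 0
  · subst hw
    simp only [norm_zero, mul_zero, zero_div, integral_zero]
    positivity
  · have hw' : 0 < ‖w‖ := norm_pos_iff.mpr hw
    set c : ℝ := μ ^ k * ‖w‖ ^ k with hc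
    have hcpos : 0 < c := by positivity
    have hca : c ^ a = μ * ‖w‖ := by
      rw [hc, Real.mul_rpow (by positivity) (by positivity),
        ← Real.rpow_natCast μ k, ← Real.rpow_natCast ‖w‖ k,
        ← Real.rpow_mul hμ.le, ← Real.rpow_mul (norm_nonneg w),
        show (k:ℝ) * a = 1 by rw [haa]; field_simp]
      simp [Real.rpow_one]
    have hc2 : ∀ s : ℝ, μ ^ (2*k) * ‖w‖ ^ (2*k) * s ^ 2 = (c * s) ^ 2 := by
      intro s
      rw [hc, mul_comm 2 k, pow_mul, pow_mul]
      ring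
    set C : ℝ := (2:ℝ) ^ (((k:ℝ) - 1) / k) with hCdef
    have hCpos : 0 < C := Real.rpow_pos_of_pos two_pos _
    set g : ℝ → ℝ := fun s => C / μ * (c * ((c*s) ^ (a-1) / (1 + (c*s)^2))) with hgdef
    have hgs : ∀ s : ℝ, 0 < s → g s = C * s ^ (a-1) * ‖w‖ / (1 + (c*s)^2) := by
      intro s hs0
      have h5 : c * c ^ (a-1) = μ * ‖w‖ := by
        nth_rewrite 1 [← Real.rpow_one c]
        rw [← Real.rpow_add hcpos, show (1:ℝ)+(a-1)=a by ring, hca]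
      have hD : (0:ℝ) < 1 + (c*s)^2 := by positivity
      rw [hgdef]
      dsimp only
      rw [Real.mul_rpow hcpos.le hs0.le]
      rw [show c * (c ^ (a-1) * s ^ (a-1) / (1 + (c*s)^2)) = (c * c ^ (a-1)) * s ^ (a-1) / (1 + (c*s)^2) by ring, h5]
      field_simp
    have hbound : ∀ s ∈ Ioo (0:ℝ) (1/2),
        (s * (1 - s)) ^ (((1 : ℝ) - k) / k) * ‖w‖ / (1 + μ ^ (2 * k) * ‖w‖ ^ (2 * k) * s ^ 2)
          ≤ g s := by
      intro s hs
      obtain ⟨hs0, hs12⟩ := hs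
      have h1s : (0:ℝ) < 1 - s := by linarith
      have hD : (0:ℝ) < 1 + (c*s)^2 := by positivity
      rw [hgs s hs0, hE, hc2 s]
      have hkey : (s * (1 - s)) ^ (a - 1) ≤ C * s ^ (a - 1) := by
        rw [Real.mul_rpow hs0.le h1s.le]
        have h6 : (1 - s) ^ (a - 1) ≤ (2⁻¹:ℝ) ^ (a - 1) :=
          Real.rpow_le_rpow_of_nonpos (by norm_num) (by linarith) (by linarith)
        have h7 : ((2:ℝ)⁻¹) ^ (a - 1) = C := by
          rw [hCdef, hE2, Real.inv_rpow (by norm_num : (0:ℝ) ≤ 2),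
            ← Real.rpow_neg (by norm_num : (0:ℝ) ≤ 2), show -(a-1) = 1 - a by ring]
        calc s ^ (a-1) * (1-s) ^ (a-1) ≤ s ^ (a-1) * (2⁻¹:ℝ) ^ (a-1) :=
              mul_le_mul_of_nonneg_left h6 (Real.rpow_nonneg hs0.le _)
          _ = C * s ^ (a-1) := by rw [h7]; ring
      gcongr
    have hgint : IntegrableOn g (Ioi (0:ℝ)) := by
      have h1 : IntegrableOn (fun s : ℝ => (c*s) ^ (a-1) / (1 + (c*s)^2)) (Ioi (0:ℝ)) := by
        have h2 := (integrableOn_Ioi_comp_mul_left_iff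
          (fun u : ℝ => u ^ (a-1) / (1 + u^2)) 0 hcpos).mpr
        rw [mul_zero] at h2
        exact h2 hIint
      exact (h1.const_mul c).const_mul (C/μ)
    have hg0 : 0 ≤ᵐ[volume.restrict (Ioi (0:ℝ))] g := by
      filter_upwards [ae_restrict_mem measurableSet_Ioi] with s hs
      have hs0 : (0:ℝ) < s := hs
      rw [hgs s hs0]
      positivity
    calc (∫ s in Ioo (0 : ℝ) (1 / 2),
        (s * (1 - s)) ^ (((1 : ℝ) - k) / k) * ‖w‖ / (1 + μ ^ (2 * k) * ‖w‖ ^ (2 * k) * s ^ 2))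
        ≤ ∫ s in Ioo (0:ℝ) (1/2), g s := by
          apply integral_mono_of_nonneg
          · filter_upwards [ae_restrict_mem measurableSet_Ioo] with s hs
            have h1 : (0:ℝ) ≤ s * (1 - s) := by nlinarith [hs.1, hs.2]
            have h2 : (0:ℝ) < 1 + μ ^ (2*k) * ‖w‖ ^ (2*k) * s^2 := by
              rw [hc2 s]; positivity
            exact div_nonneg (mul_nonneg (Real.rpow_nonneg h1 _) (norm_nonneg w)) h2.le
          · exact hgint.mono_set (fun x hx => hx.1)
          · filter_upwards [ae_restrict_mem measurableSet_Ioo] with s hs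
            exact hbound s hs
      _ ≤ ∫ s in Ioi (0:ℝ), g s :=
          setIntegral_mono_set hgint hg0 (HasSubset.Subset.eventuallyLE (fun x hx => hx.1))
      _ = C / μ * (π / (2 * Real.sin (π * a / 2))) := by
          rw [hgdef]
          dsimp only
          rw [MeasureTheory.integral_const_mul, MeasureTheory.integral_const_mul,
            integral_comp_mul_left_Ioi (fun u : ℝ => u ^ (a-1) / (1 + u^2)) 0 hcpos,
            mul_zero, smul_eq_mul, hIval]
          field_simp
end

section
/- Convolution of order k is bounded on exponentially weighted spaces: if H, J : ℂ → ℂ satisfy |H(w)| ≤ A·e^{μ^k|w|^k}/(1+μ^{2k}|w|^{2k}) and |J(w)| ≤ B·e^{μ^k|w|^k}/(1+μ^{2k}|w|^{2k}) for all w, then the convolution (H⋆ₖJ)(w) = w∫₀¹ (s(1−s))^{(1−k)/k} H(w(1−s)^{1/k}) J(w s^{1/k}) ds satisfies |(H⋆ₖJ)(w)| ≤ (q_k/μ)·A·B·e^{μ^k|w|^k}/(1+μ^{2k}|w|^{2k}) for all w, where q_k = 2^{(4k−1)/k}·π / (2 cos(π(k−1)/(2k))). -/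
open Real Set MeasureTheory Complex


lemma betaReal {p : ℝ} (hp : 0 < p) (hp1 : p < 1) :
    ∫ t in (0:ℝ)..1, t ^ (p - 1) * (1 - t) ^ (-p) = π / Real.sin (π * p) := by
  have h1 : Complex.Gamma p * Complex.Gamma (1 - p) =
      Complex.Gamma (p + (1 - p)) * Complex.betaIntegral p (1 - p) :=
    Complex.Gamma_mul_Gamma_eq_betaIntegral (by simpa using hp)
      (by simp [Complex.sub_re]; norm_num [hp1])
  rw [show (p : ℂ) + (1 - p) = 1 by ring, Complex.Gamma_one, one_mul,
    Complex.Gamma_mul_Gamma_one_sub] at h1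
  have h2 : Complex.betaIntegral p (1 - p) =
      ((∫ t in (0:ℝ)..1, t ^ (p - 1) * (1 - t) ^ (-p) : ℝ) : ℂ) := by
    rw [Complex.betaIntegral, ← intervalIntegral.integral_ofReal]
    refine intervalIntegral.integral_congr fun t ht => ?_
    rw [uIcc_of_le (by norm_num : (0:ℝ) ≤ 1)] at ht
    rw [Complex.ofReal_mul, Complex.ofReal_cpow ht.1, Complex.ofReal_cpow (by linarith [ht.2] : (0:ℝ) ≤ 1 - t)]
    push_cast
    ring_nf
  rw [h2] at h1
  have h3 : Complex.sin (π * p) = ((Real.sin (π * p) : ℝ) : ℂ) := by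
    push_cast [Complex.ofReal_sin]; ring_nf
  rw [h3] at h1
  have hsin : Real.sin (π * p) ≠ 0 := by
    apply ne_of_gt
    apply Real.sin_pos_of_pos_of_lt_pi (by positivity)
    calc π * p < π * 1 := by have := Real.pi_pos; nlinarith
    _ = π := mul_one π
  have := h1.symm
  rw [show ((π:ℝ) : ℂ) / ((Real.sin (π * p) : ℝ) : ℂ) = (((π / Real.sin (π * p)) : ℝ) : ℂ) by
    push_cast; ring] at this
  exact_mod_cast this

lemma integrableOn_kernel {a y : ℝ} (ha : 0 < a) (ha1 : a ≤ 1) (hy : 0 < y) :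
    IntegrableOn (fun s : ℝ => s ^ (a - 1) / (1 + y * s ^ 2)) (Ioi 0) := by
  have hmeas : Measurable (fun s : ℝ => s ^ (a - 1) / (1 + y * s ^ 2)) := by
    fun_prop
  have h1 : IntegrableOn (fun s : ℝ => s ^ (a - 1) / (1 + y * s ^ 2)) (Ioc 0 1) := by
    have hg : IntegrableOn (fun s : ℝ => s ^ (a - 1)) (Ioc 0 1) := by
      have := intervalIntegral.intervalIntegrable_rpow' (a := 0) (b := 1) (by linarith : (-1:ℝ) < a - 1)
      simpa [intervalIntegrable_iff_integrableOn_Ioc_of_le (by norm_num : (0:ℝ) ≤ 1)] using this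
    apply Integrable.mono' hg (hmeas.aestronglyMeasurable.restrict)
    rw [ae_restrict_iff' measurableSet_Ioc]
    filter_upwards with s hs
    have hs0 : 0 < s := hs.1
    have hden : (1:ℝ) ≤ 1 + y * s ^ 2 := by nlinarith
    rw [Real.norm_eq_abs, _root_.abs_of_nonneg (by positivity)]
    rw [div_le_iff₀ (by positivity)]
    nlinarith [Real.rpow_nonneg hs0.le (a-1)]
  have h2 : IntegrableOn (fun s : ℝ => s ^ (a - 1) / (1 + y * s ^ 2)) (Ioi 1) := by
    have hg : IntegrableOn (fun s : ℝ => y⁻¹ * s ^ (a - 3)) (Ioi 1) :=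
      (integrableOn_Ioi_rpow_of_lt (by linarith : a - 3 < -1) one_pos).const_mul _
    apply Integrable.mono' hg (hmeas.aestronglyMeasurable.restrict)
    rw [ae_restrict_iff' measurableSet_Ioi]
    filter_upwards with s hs
    have hs0 : (0:ℝ) < s := lt_trans one_pos hs
    rw [Real.norm_eq_abs, _root_.abs_of_nonneg (by positivity)]
    have key : s ^ (a - 1) / (1 + y * s ^ 2) ≤ s ^ (a - 1) / (y * s ^ 2) := by
      apply div_le_div_of_nonneg_left (Real.rpow_nonneg hs0.le _) (by positivity) (by linarith)
    refine key.trans (le_of_eq ?_)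
    have h3 : s ^ (a-1) / s ^ (2:ℕ) = s ^ (a - 3) := by
      rw [← Real.rpow_natCast s 2, ← Real.rpow_sub hs0]; norm_num; ring_nf
    rw [mul_comm y (s^2), ← div_div, h3, div_eq_inv_mul]
  have := h1.union h2
  rwa [Ioc_union_Ioi_eq_Ioi (by norm_num : (0:ℝ) ≤ 1)] at this

lemma I_eval {a : ℝ} (ha : 0 < a) (ha1 : a ≤ 1) :
    ∫ u in Ioi (0:ℝ), u ^ (a - 1) / (1 + u ^ 2) = π / (2 * Real.sin (π * a / 2)) := by
  have hp : (0:ℝ) < a / 2 := by linarith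
  have hp1 : a / 2 < 1 := by linarith
  set g : ℝ → ℝ := fun t => t ^ (a / 2 - 1) * (1 - t) ^ (-(a / 2)) with hg
  set f : ℝ → ℝ := fun u => u ^ 2 / (1 + u ^ 2) with hf
  set f' : ℝ → ℝ := fun u => 2 * u / (1 + u ^ 2) ^ 2 with hf'
  have hderiv : ∀ u ∈ Ioi (0:ℝ), HasDerivWithinAt f (f' u) (Ioi 0) u := by
    intro u _
    have h1 : HasDerivAt (fun u : ℝ => u ^ 2) (2 * u) u := by
      simpa using hasDerivAt_pow 2 u
    have h2 : HasDerivAt (fun u : ℝ => 1 + u ^ 2) (2 * u) u := h1.const_add 1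
    have h3 := h1.div h2 (by positivity)
    have : (2 * u * (1 + u ^ 2) - u ^ 2 * (2 * u)) / (1 + u ^ 2) ^ 2 = f' u := by
      rw [hf']; field_simp; ring
    rw [this] at h3
    exact h3.hasDerivWithinAt
  have hinj : InjOn f (Ioi 0) := by
    intro u hu v hv h
    simp only [hf, mem_Ioi] at *
    have hu2 : (0:ℝ) < 1 + u ^ 2 := by positivity
    have hv2 : (0:ℝ) < 1 + v ^ 2 := by positivity
    have h2 : u ^ 2 = v ^ 2 := by
      field_simp at h; nlinarith
    calc u = √(u ^ 2) := (Real.sqrt_sq hu.le).symm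
    _ = √(v ^ 2) := by rw [h2]
    _ = v := Real.sqrt_sq hv.le
  have himg : f '' Ioi 0 = Ioo 0 1 := by
    ext t
    constructor
    · rintro ⟨u, hu, rfl⟩
      simp only [mem_Ioi] at hu
      have hu2 : (0:ℝ) < 1 + u ^ 2 := by positivity
      constructor
      · positivity
      · rw [hf]; rw [div_lt_one hu2]; nlinarith
    · intro ht
      obtain ⟨ht0, ht1⟩ := ht
      have h1t : (0:ℝ) < 1 - t := by linarith
      refine ⟨√(t / (1 - t)), ?_, ?_⟩
      · simp only [mem_Ioi]
        exact Real.sqrt_pos.mpr (by positivity)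
      · have hsq : (√(t / (1 - t))) ^ 2 = t / (1 - t) := Real.sq_sqrt (by positivity)
        rw [hf]
        simp only [hsq]
        rw [show (1:ℝ) + t / (1 - t) = 1 / (1 - t) by field_simp; ring]
        rw [div_div_eq_mul_div, div_mul_eq_mul_div, div_one, mul_div_assoc, div_self h1t.ne', mul_one]
  have key := integral_image_eq_integral_abs_deriv_smul measurableSet_Ioi hderiv hinj g
  rw [himg] at key
  -- LHS of key is the Beta integral
  have hbeta : ∫ t in Ioo (0:ℝ) 1, g t = π / Real.sin (π * (a / 2)) := by
    rw [← integral_Ioc_eq_integral_Ioo, ←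
      intervalIntegral.integral_of_le (by norm_num : (0:ℝ) ≤ 1)]
    exact betaReal hp hp1
  -- RHS of key: simplify the integrand
  have hcongr : ∀ u ∈ Ioi (0:ℝ), |f' u| • g (f u) = 2 * (u ^ (a - 1) / (1 + u ^ 2)) := by
    intro u hu
    simp only [mem_Ioi] at hu
    have hu2 : (0:ℝ) < 1 + u ^ 2 := by positivity
    have e1 : 1 - f u = 1 / (1 + u ^ 2) := by rw [hf]; field_simp; ring
    have e2 : (f u) ^ (a / 2 - 1) = u ^ (a - 2) * (1 + u ^ 2) ^ (1 - a / 2) := by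
      rw [hf]
      simp only []
      rw [Real.div_rpow (by positivity) hu2.le]
      rw [show ((1:ℝ) + u ^ 2) ^ (1 - a / 2) = (((1:ℝ) + u ^ 2) ^ (a / 2 - 1))⁻¹ by
        rw [← Real.rpow_neg hu2.le]; congr 1; ring]
      rw [← div_eq_mul_inv]
      congr 1
      rw [← Real.rpow_natCast u 2, ← Real.rpow_mul hu.le]
      congr 1
      push_cast
      ring
    have e3 : (1 / (1 + u ^ 2) : ℝ) ^ (-(a / 2)) = (1 + u ^ 2) ^ (a / 2) := by
      rw [one_div, Real.inv_rpow hu2.le, ← Real.rpow_neg hu2.le, neg_neg]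
    have e4 : |f' u| = 2 * u / (1 + u ^ 2) ^ 2 := by
      rw [hf', _root_.abs_of_nonneg (by positivity)]
    rw [smul_eq_mul, e4, hg]
    simp only []
    rw [e1, e2, e3]
    have e5 : (1 + u ^ 2) ^ (1 - a / 2) * (1 + u ^ 2) ^ (a / 2) = (1 + u ^ 2) := by
      rw [← Real.rpow_add hu2]; norm_num
    have e6 : u ^ (a - 2) * u = u ^ (a - 1) := by
      nth_rewrite 2 [← Real.rpow_one u]
      rw [← Real.rpow_add hu]; ring_nf
    rw [mul_assoc, e5, ← e6]
    field_simp
  rw [setIntegral_congr_fun measurableSet_Ioi hcongr] at key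
  rw [MeasureTheory.integral_const_mul] at key
  rw [hbeta] at key
  have hsin : Real.sin (π * (a / 2)) ≠ 0 := by
    apply ne_of_gt
    apply Real.sin_pos_of_pos_of_lt_pi (by positivity)
    have := Real.pi_pos; nlinarith
  rw [show π * (a / 2) = π * a / 2 by ring] at key hsin
  field_simp at key ⊢
  linarith

lemma scaled_eval {a x : ℝ} (ha : 0 < a) (ha1 : a ≤ 1) (hx : 0 < x) :
    ∫ s in Ioi (0:ℝ), s ^ (a - 1) / (1 + x ^ 2 * s ^ 2) =
      x ^ (-a) * (π / (2 * Real.sin (π * a / 2))) := by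
  have key := MeasureTheory.integral_comp_mul_left_Ioi
    (fun u => u ^ (a - 1) / (1 + u ^ 2)) 0 hx
  rw [mul_zero] at key
  have hcongr : ∀ s ∈ Ioi (0:ℝ),
      (x * s) ^ (a - 1) / (1 + (x * s) ^ 2)
        = x ^ (a - 1) * (s ^ (a - 1) / (1 + x ^ 2 * s ^ 2)) := by
    intro s hs
    simp only [mem_Ioi] at hs
    rw [Real.mul_rpow hx.le hs.le, mul_pow, mul_div_assoc]
  rw [setIntegral_congr_fun measurableSet_Ioi hcongr] at key
  rw [MeasureTheory.integral_const_mul] at key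
  rw [I_eval ha ha1] at key
  have hxa : x ^ (a - 1) ≠ 0 := by positivity
  have h2 : x ^ (-a) = (x ^ (a-1))⁻¹ * x⁻¹ := by
    rw [← Real.rpow_neg_one x, ← Real.rpow_neg hx.le, ← Real.rpow_add hx]
    congr 1; ring
  rw [smul_eq_mul] at key
  rw [h2, mul_assoc, ← key, inv_mul_cancel_left₀ hxa]

lemma g0_integrable {a x : ℝ} (ha : 0 < a) (ha1 : a ≤ 1) :
    IntegrableOn (fun s : ℝ =>
      (s * (1 - s)) ^ (a - 1) / ((1 + x ^ 2 * (1 - s) ^ 2) * (1 + x ^ 2 * s ^ 2)))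
      (Ioo 0 1) := by
  have hmeas : Measurable (fun s : ℝ =>
      (s * (1 - s)) ^ (a - 1) / ((1 + x ^ 2 * (1 - s) ^ 2) * (1 + x ^ 2 * s ^ 2))) := by
    fun_prop
  have hbase : IntervalIntegrable (fun s : ℝ => s ^ (a - 1)) volume 0 1 :=
    intervalIntegral.intervalIntegrable_rpow' (by linarith)
  have h1 : IntegrableOn (fun s : ℝ => s ^ (a - 1)) (Ioo 0 1) := by
    have := hbase
    rw [intervalIntegrable_iff_integrableOn_Ioc_of_le (by norm_num : (0:ℝ) ≤ 1)] at this
    exact this.mono_set Ioo_subset_Ioc_self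
  have h2 : IntegrableOn (fun s : ℝ => (1 - s) ^ (a - 1)) (Ioo 0 1) := by
    have := (hbase.comp_sub_left 1).symm
    simp only [sub_self, sub_zero] at this
    rw [intervalIntegrable_iff_integrableOn_Ioc_of_le (by norm_num : (0:ℝ) ≤ 1)] at this
    exact this.mono_set Ioo_subset_Ioc_self
  have hdom : IntegrableOn
      (fun s : ℝ => 2 * (s ^ (a - 1) + (1 - s) ^ (a - 1))) (Ioo 0 1) :=
    ((h1.add h2).const_mul 2)
  apply Integrable.mono' hdom (hmeas.aestronglyMeasurable.restrict)
  rw [ae_restrict_iff' measurableSet_Ioo]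
  filter_upwards with s hs
  obtain ⟨hs0, hs1⟩ := hs
  have h1s : (0:ℝ) < 1 - s := by linarith
  have hnum : (0:ℝ) ≤ (s * (1 - s)) ^ (a - 1) := Real.rpow_nonneg (by positivity) _
  have hden : (1:ℝ) ≤ (1 + x ^ 2 * (1 - s) ^ 2) * (1 + x ^ 2 * s ^ 2) := by
    have e1 : (0:ℝ) ≤ x ^ 2 * (1 - s) ^ 2 := by positivity
    have e2 : (0:ℝ) ≤ x ^ 2 * s ^ 2 := by positivity
    nlinarith [mul_nonneg e1 e2]
  rw [Real.norm_eq_abs, _root_.abs_of_nonneg (by positivity)]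
  have step1 : (s * (1 - s)) ^ (a - 1) / ((1 + x ^ 2 * (1 - s) ^ 2) * (1 + x ^ 2 * s ^ 2))
      ≤ (s * (1 - s)) ^ (a - 1) := by
    apply div_le_self hnum hden
  refine step1.trans ?_
  rw [Real.mul_rpow hs0.le h1s.le]
  have hs' : (0:ℝ) ≤ s ^ (a - 1) := Real.rpow_nonneg hs0.le _
  have h1s' : (0:ℝ) ≤ (1 - s) ^ (a - 1) := Real.rpow_nonneg h1s.le _
  rcases le_total s (1/2) with hhalf | hhalf
  · have : (1 - s) ^ (a - 1) ≤ 2 := by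
      calc (1 - s) ^ (a - 1) ≤ (1/2 : ℝ) ^ (a - 1) :=
            Real.rpow_le_rpow_of_nonpos (by norm_num) (by linarith) (by linarith)
      _ = 2 ^ (1 - a) := by
          rw [one_div, Real.inv_rpow (by norm_num : (0:ℝ) ≤ 2), ← Real.rpow_neg (by norm_num : (0:ℝ) ≤ 2)]
          congr 1; ring
      _ ≤ 2 ^ (1:ℝ) := Real.rpow_le_rpow_of_exponent_le (by norm_num) (by linarith)
      _ = 2 := Real.rpow_one 2
    nlinarith
  · have : s ^ (a - 1) ≤ 2 := by
      calc s ^ (a - 1) ≤ (1/2 : ℝ) ^ (a - 1) :=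
            Real.rpow_le_rpow_of_nonpos (by norm_num) (by linarith) (by linarith)
      _ = 2 ^ (1 - a) := by
          rw [one_div, Real.inv_rpow (by norm_num : (0:ℝ) ≤ 2), ← Real.rpow_neg (by norm_num : (0:ℝ) ≤ 2)]
          congr 1; ring
      _ ≤ 2 ^ (1:ℝ) := Real.rpow_le_rpow_of_exponent_le (by norm_num) (by linarith)
      _ = 2 := Real.rpow_one 2
    nlinarith

lemma kernel_bound {a x : ℝ} (ha : 0 < a) (ha1 : a ≤ 1) (hx : 0 < x) :
    ∫ s in Ioo (0:ℝ) 1,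
        (s * (1 - s)) ^ (a - 1) / ((1 + x ^ 2 * (1 - s) ^ 2) * (1 + x ^ 2 * s ^ 2))
      ≤ (2:ℝ) ^ (4 - a) * (π / (2 * Real.sin (π * a / 2))) * (x ^ (-a) / (1 + x ^ 2)) := by
  set g₀ : ℝ → ℝ := fun s =>
    (s * (1 - s)) ^ (a - 1) / ((1 + x ^ 2 * (1 - s) ^ 2) * (1 + x ^ 2 * s ^ 2)) with hg₀
  have hInt : IntegrableOn g₀ (Ioo 0 1) := g0_integrable ha ha1
  have hii : IntervalIntegrable g₀ volume 0 1 := by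
    rw [intervalIntegrable_iff_integrableOn_Ioc_of_le (by norm_num : (0:ℝ) ≤ 1),
      integrableOn_Ioc_iff_integrableOn_Ioo]
    exact hInt
  have hsym : ∀ s : ℝ, g₀ (1 - s) = g₀ s := by
    intro s
    rw [hg₀]
    simp only []
    rw [show (1:ℝ) - (1 - s) = s by ring]
    rw [mul_comm (1 - s) s, mul_comm (1 + x ^ 2 * s ^ 2) (1 + x ^ 2 * (1 - s) ^ 2)]
  have hii1 : IntervalIntegrable g₀ volume 0 (1/2) := by
    apply hii.mono_set
    rw [uIcc_of_le (by norm_num : (0:ℝ) ≤ 1/2), uIcc_of_le (by norm_num : (0:ℝ) ≤ 1)]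
    exact Icc_subset_Icc le_rfl (by norm_num)
  have hii2 : IntervalIntegrable g₀ volume (1/2) 1 := by
    apply hii.mono_set
    rw [uIcc_of_le (by norm_num : (1/2:ℝ) ≤ 1), uIcc_of_le (by norm_num : (0:ℝ) ≤ 1)]
    exact Icc_subset_Icc (by norm_num) le_rfl
  have hrefl : ∫ s in (1/2:ℝ)..1, g₀ s = ∫ s in (0:ℝ)..(1/2), g₀ s := by
    have h := intervalIntegral.integral_comp_sub_left (a := (1/2:ℝ)) (b := 1) g₀ 1
    simp only [hsym] at h
    rw [h]
    norm_num
  have hsplit : ∫ s in Ioo (0:ℝ) 1, g₀ s = 2 * ∫ s in (0:ℝ)..(1/2), g₀ s := by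
    rw [← integral_Ioc_eq_integral_Ioo,
      ← intervalIntegral.integral_of_le (by norm_num : (0:ℝ) ≤ 1),
      ← intervalIntegral.integral_add_adjacent_intervals hii1 hii2, hrefl]
    ring
  -- bound the half integral
  have hx2 : (0:ℝ) < x ^ 2 := by positivity
  have hIoi : IntegrableOn (fun s : ℝ => s ^ (a - 1) / (1 + x ^ 2 * s ^ 2)) (Ioi 0) := by
    have := integrableOn_kernel ha ha1 hx2
    exact this
  set C : ℝ := (2:ℝ) ^ (1 - a) * (4 / (1 + x ^ 2)) with hC
  have hC0 : 0 ≤ C := by positivity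
  have hhalf : ∫ s in (0:ℝ)..(1/2), g₀ s
      ≤ C * (x ^ (-a) * (π / (2 * Real.sin (π * a / 2)))) := by
    rw [intervalIntegral.integral_of_le (by norm_num : (0:ℝ) ≤ 1/2),
      integral_Ioc_eq_integral_Ioo]
    have step1 : ∫ s in Ioo (0:ℝ) (1/2), g₀ s
        ≤ ∫ s in Ioo (0:ℝ) (1/2), C * (s ^ (a - 1) / (1 + x ^ 2 * s ^ 2)) := by
      apply setIntegral_mono_on
      · exact hInt.mono_set (Ioo_subset_Ioo le_rfl (by norm_num))
      · exact (hIoi.mono_set (Ioo_subset_Ioi_self)).const_mul C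
      · exact measurableSet_Ioo
      · intro s hs
        obtain ⟨hs0, hs2⟩ := hs
        have h1s : (1:ℝ) - s ≥ 1/2 := by linarith
        have h1s0 : (0:ℝ) < 1 - s := by linarith
        have hD1 : (0:ℝ) < 1 + x ^ 2 * (1 - s) ^ 2 := by positivity
        have hD2 : (0:ℝ) < 1 + x ^ 2 * s ^ 2 := by positivity
        rw [hg₀]
        simp only []
        rw [Real.mul_rpow hs0.le h1s0.le]
        have e1 : (1 - s) ^ (a - 1) ≤ 2 ^ (1 - a) := by
          calc (1 - s) ^ (a - 1) ≤ (1/2 : ℝ) ^ (a - 1) :=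
              Real.rpow_le_rpow_of_nonpos (by norm_num) h1s (by linarith)
          _ = 2 ^ (1 - a) := by
              rw [one_div, Real.inv_rpow (by norm_num : (0:ℝ) ≤ 2),
                ← Real.rpow_neg (by norm_num : (0:ℝ) ≤ 2)]
              congr 1; ring
        have e2 : 1 / (1 + x ^ 2 * (1 - s) ^ 2) ≤ 4 / (1 + x ^ 2) := by
          rw [div_le_div_iff₀ hD1 (by positivity)]
          have h4 : (1/4:ℝ) ≤ (1 - s) ^ 2 := by nlinarith
          have h5 : x ^ 2 * (1/4) ≤ x ^ 2 * (1 - s) ^ 2 :=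
            mul_le_mul_of_nonneg_left h4 (sq_nonneg x)
          linarith
        have hs' : (0:ℝ) ≤ s ^ (a - 1) := Real.rpow_nonneg hs0.le _
        have h1s' : (0:ℝ) ≤ (1 - s) ^ (a - 1) := Real.rpow_nonneg h1s0.le _
        calc s ^ (a - 1) * (1 - s) ^ (a - 1) / ((1 + x ^ 2 * (1 - s) ^ 2) * (1 + x ^ 2 * s ^ 2))
            = ((1 - s) ^ (a - 1) * (1 / (1 + x ^ 2 * (1 - s) ^ 2)))
              * (s ^ (a - 1) / (1 + x ^ 2 * s ^ 2)) := by
              field_simp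
          _ ≤ (2 ^ (1 - a) * (4 / (1 + x ^ 2))) * (s ^ (a - 1) / (1 + x ^ 2 * s ^ 2)) := by
              apply mul_le_mul_of_nonneg_right _ (by positivity)
              exact mul_le_mul e1 e2 (by positivity) (by positivity)
          _ = C * (s ^ (a - 1) / (1 + x ^ 2 * s ^ 2)) := by rw [hC]
    refine step1.trans ?_
    rw [MeasureTheory.integral_const_mul]
    apply mul_le_mul_of_nonneg_left _ hC0
    have step2 : ∫ s in Ioo (0:ℝ) (1/2), s ^ (a - 1) / (1 + x ^ 2 * s ^ 2)
        ≤ ∫ s in Ioi (0:ℝ), s ^ (a - 1) / (1 + x ^ 2 * s ^ 2) := by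
      apply setIntegral_mono_set hIoi
      · rw [Filter.EventuallyLE, ae_restrict_iff' measurableSet_Ioi]
        filter_upwards with s hs
        have : (0:ℝ) < s := hs
        simp only [Pi.zero_apply]
        positivity
      · exact (Ioo_subset_Ioi_self : Ioo (0:ℝ) (1/2) ⊆ Ioi 0).eventuallyLE
    rw [← scaled_eval ha ha1 hx]
    exact step2
  calc ∫ s in Ioo (0:ℝ) 1, g₀ s = 2 * ∫ s in (0:ℝ)..(1/2), g₀ s := hsplit
    _ ≤ 2 * (C * (x ^ (-a) * (π / (2 * Real.sin (π * a / 2))))) := by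
        apply mul_le_mul_of_nonneg_left hhalf (by norm_num)
    _ = (2:ℝ) ^ (4 - a) * (π / (2 * Real.sin (π * a / 2))) * (x ^ (-a) / (1 + x ^ 2)) := by
        rw [hC]
        have h8 : (2:ℝ) ^ (4 - a) = 8 * (2:ℝ) ^ (1 - a) := by
          rw [show (4:ℝ) - a = 3 + (1 - a) by ring, Real.rpow_add (by norm_num : (0:ℝ) < 2)]
          congr 1
          rw [show (3:ℝ) = ((3:ℕ):ℝ) by norm_num, Real.rpow_natCast]
          norm_num
        rw [h8]
        field_simp
        ring

/-- Boundedness of the order-`k` convolution on exponentially weighted spaces: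
if `|H(w)| ≤ A e^(μ^k|w|^k)/(1+μ^(2k)|w|^(2k))` and similarly for `J` with constant `B`,
then `|(H ⋆ₖ J)(w)| ≤ (q_k/μ) A B e^(μ^k|w|^k)/(1+μ^(2k)|w|^(2k))`, with
`q_k = 2^((4k−1)/k) π / (2 cos(π(k−1)/(2k)))`. -/
theorem stmt_8 (k : ℕ) (hk : 1 ≤ k) (μ A B : ℝ) (hμ : 0 < μ) (hA : 0 ≤ A) (hB : 0 ≤ B)
    (H J : ℂ → ℂ) (hHc : Continuous H) (hJc : Continuous J)
    (hH : ∀ w : ℂ, ‖H w‖ ≤ A * Real.exp (μ ^ k * ‖w‖ ^ k) / (1 + μ ^ (2 * k) * ‖w‖ ^ (2 * k)))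
    (hJ : ∀ w : ℂ, ‖J w‖ ≤ B * Real.exp (μ ^ k * ‖w‖ ^ k) / (1 + μ ^ (2 * k) * ‖w‖ ^ (2 * k))) :
    ∀ w : ℂ,
      ‖w * ∫ s in Ioo (0 : ℝ) 1,
          ((s * (1 - s)) ^ (((1 : ℝ) - k) / k) : ℝ) •
            (H (w * (((1 - s) ^ ((1 : ℝ) / k) : ℝ) : ℂ)) *
             J (w * ((s ^ ((1 : ℝ) / k) : ℝ) : ℂ)))‖ ≤
        ((2 : ℝ) ^ ((4 * (k : ℝ) - 1) / k) * π / (2 * Real.cos (π * ((k : ℝ) - 1) / (2 * k))) / μ)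
          * A * B * Real.exp (μ ^ k * ‖w‖ ^ k) / (1 + μ ^ (2 * k) * ‖w‖ ^ (2 * k)) := by
  have hk0 : k ≠ 0 := by omega
  have hc : (0:ℝ) < (k:ℝ) := by exact_mod_cast Nat.pos_of_ne_zero hk0
  set a : ℝ := ((k:ℝ))⁻¹ with ha_def
  have ha : 0 < a := by positivity
  have ha1 : a ≤ 1 := by
    rw [ha_def]
    rw [inv_le_one_iff₀]
    right
    exact_mod_cast hk
  have hsin : 0 < Real.sin (π * a / 2) := by
    apply Real.sin_pos_of_pos_of_lt_pi (by positivity)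
    have hpi := Real.pi_pos
    nlinarith
  have hcos : Real.cos (π * ((k : ℝ) - 1) / (2 * k)) = Real.sin (π * a / 2) := by
    rw [show π * ((k : ℝ) - 1) / (2 * k) = π / 2 - π * a / 2 by
      rw [ha_def]; field_simp]
    exact Real.cos_pi_div_two_sub _
  have h2exp : (2 : ℝ) ^ ((4 * (k : ℝ) - 1) / k) = 2 ^ (4 - a) := by
    congr 1
    rw [ha_def]; field_simp
  have hexp1 : ((1 : ℝ) - (k:ℝ)) / (k:ℝ) = a - 1 := by
    rw [ha_def]; field_simp
  intro w
  rw [hcos, h2exp, hexp1]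
  rcases eq_or_ne w 0 with rfl | hw
  · rw [zero_mul, norm_zero]
    have hq : (0:ℝ) ≤ 2 ^ (4 - a) * π / (2 * Real.sin (π * a / 2)) / μ :=
      div_nonneg (div_nonneg (by positivity) (by linarith)) hμ.le
    apply div_nonneg _ (by positivity)
    exact mul_nonneg (mul_nonneg (mul_nonneg hq hA) hB) (Real.exp_nonneg _)
  · set r : ℝ := ‖w‖ with hr_def
    have hr : 0 < r := norm_pos_iff.mpr hw
    set x : ℝ := μ ^ k * r ^ k with hx_def
    have hx : 0 < x := by positivity
    have hden2 : μ ^ (2 * k) * r ^ (2 * k) = x ^ 2 := by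
      rw [hx_def, mul_pow, ← pow_mul, ← pow_mul, mul_comm k 2]
    set g₀ : ℝ → ℝ := fun s =>
      (s * (1 - s)) ^ (a - 1) / ((1 + x ^ 2 * (1 - s) ^ 2) * (1 + x ^ 2 * s ^ 2)) with hg₀
    -- pointwise bound
    have hpoint : ∀ s ∈ Ioo (0:ℝ) 1,
        ‖((s * (1 - s)) ^ (a - 1) : ℝ) •
            (H (w * (((1 - s) ^ ((1 : ℝ) / k) : ℝ) : ℂ)) *
             J (w * ((s ^ ((1 : ℝ) / k) : ℝ) : ℂ)))‖ ≤ A * B * Real.exp x * g₀ s := by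
      intro s hs
      obtain ⟨hs0, hs1⟩ := hs
      have h1s : (0:ℝ) < 1 - s := by linarith
      have hb1 : (0:ℝ) ≤ (1 - s) ^ ((1:ℝ)/k) := Real.rpow_nonneg h1s.le _
      have hb2 : (0:ℝ) ≤ s ^ ((1:ℝ)/k) := Real.rpow_nonneg hs0.le _
      have hnorm1 : ‖w * (((1 - s) ^ ((1 : ℝ) / k) : ℝ) : ℂ)‖ = r * (1 - s) ^ ((1:ℝ)/k) := by
        rw [norm_mul, Complex.norm_real, Real.norm_eq_abs, _root_.abs_of_nonneg hb1, hr_def]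
      have hnorm2 : ‖w * ((s ^ ((1 : ℝ) / k) : ℝ) : ℂ)‖ = r * s ^ ((1:ℝ)/k) := by
        rw [norm_mul, Complex.norm_real, Real.norm_eq_abs, _root_.abs_of_nonneg hb2, hr_def]
      have hpow1 : ((1 - s) ^ ((1:ℝ)/k)) ^ k = 1 - s := by
        rw [one_div]; exact Real.rpow_inv_natCast_pow h1s.le hk0
      have hpow2 : (s ^ ((1:ℝ)/k)) ^ k = s := by
        rw [one_div]; exact Real.rpow_inv_natCast_pow hs0.le hk0
      have hpow1' : ((1 - s) ^ ((1:ℝ)/k)) ^ (2 * k) = (1 - s) ^ 2 := by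
        rw [mul_comm 2 k, pow_mul, hpow1]
      have hpow2' : (s ^ ((1:ℝ)/k)) ^ (2 * k) = s ^ 2 := by
        rw [mul_comm 2 k, pow_mul, hpow2]
      have hHb : ‖H (w * (((1 - s) ^ ((1 : ℝ) / k) : ℝ) : ℂ))‖ ≤
          A * Real.exp (x * (1 - s)) / (1 + x ^ 2 * (1 - s) ^ 2) := by
        have := hH (w * (((1 - s) ^ ((1 : ℝ) / k) : ℝ) : ℂ))
        rwa [hnorm1, mul_pow, mul_pow, hpow1, hpow1',
          show μ ^ k * (r ^ k * (1 - s)) = x * (1 - s) by rw [hx_def]; ring,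
          show μ ^ (2*k) * (r ^ (2*k) * (1 - s)^2) = x ^ 2 * (1 - s) ^ 2 by
            rw [← hden2]; ring] at this
      have hJb : ‖J (w * ((s ^ ((1 : ℝ) / k) : ℝ) : ℂ))‖ ≤
          B * Real.exp (x * s) / (1 + x ^ 2 * s ^ 2) := by
        have := hJ (w * ((s ^ ((1 : ℝ) / k) : ℝ) : ℂ))
        rwa [hnorm2, mul_pow, mul_pow, hpow2, hpow2',
          show μ ^ k * (r ^ k * s) = x * s by rw [hx_def]; ring,
          show μ ^ (2*k) * (r ^ (2*k) * s^2) = x ^ 2 * s ^ 2 by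
            rw [← hden2]; ring] at this
      rw [norm_smul, Real.norm_eq_abs, _root_.abs_of_nonneg (Real.rpow_nonneg (by positivity) _),
        norm_mul]
      have hD1 : (0:ℝ) < 1 + x ^ 2 * (1 - s) ^ 2 := by positivity
      have hD2 : (0:ℝ) < 1 + x ^ 2 * s ^ 2 := by positivity
      have hprod : ‖H (w * (((1 - s) ^ ((1 : ℝ) / k) : ℝ) : ℂ))‖ *
          ‖J (w * ((s ^ ((1 : ℝ) / k) : ℝ) : ℂ))‖ ≤
          A * B * Real.exp x / ((1 + x ^ 2 * (1 - s) ^ 2) * (1 + x ^ 2 * s ^ 2)) := by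
        calc ‖H (w * (((1 - s) ^ ((1 : ℝ) / k) : ℝ) : ℂ))‖ *
            ‖J (w * ((s ^ ((1 : ℝ) / k) : ℝ) : ℂ))‖
            ≤ (A * Real.exp (x * (1 - s)) / (1 + x ^ 2 * (1 - s) ^ 2)) *
              (B * Real.exp (x * s) / (1 + x ^ 2 * s ^ 2)) :=
              mul_le_mul hHb hJb (norm_nonneg _) (by positivity)
          _ = A * B * (Real.exp (x * (1 - s)) * Real.exp (x * s)) /
              ((1 + x ^ 2 * (1 - s) ^ 2) * (1 + x ^ 2 * s ^ 2)) := by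
              rw [div_mul_div_comm]; congr 1; ring
          _ = A * B * Real.exp x / ((1 + x ^ 2 * (1 - s) ^ 2) * (1 + x ^ 2 * s ^ 2)) := by
              rw [← Real.exp_add, show x * (1 - s) + x * s = x by ring]
      calc (s * (1 - s)) ^ (a - 1) *
          (‖H (w * (((1 - s) ^ ((1 : ℝ) / k) : ℝ) : ℂ))‖ *
            ‖J (w * ((s ^ ((1 : ℝ) / k) : ℝ) : ℂ))‖)
          ≤ (s * (1 - s)) ^ (a - 1) *
            (A * B * Real.exp x / ((1 + x ^ 2 * (1 - s) ^ 2) * (1 + x ^ 2 * s ^ 2))) :=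
            mul_le_mul_of_nonneg_left hprod (Real.rpow_nonneg (by positivity) _)
        _ = A * B * Real.exp x * g₀ s := by rw [hg₀]; ring
    -- integrability of the bound
    have hbInt : IntegrableOn (fun s => A * B * Real.exp x * g₀ s) (Ioo (0:ℝ) 1) := by
      exact (g0_integrable ha ha1 (x := x)).const_mul _
    have hnormint : ‖∫ s in Ioo (0 : ℝ) 1,
        ((s * (1 - s)) ^ (a - 1) : ℝ) •
          (H (w * (((1 - s) ^ ((1 : ℝ) / k) : ℝ) : ℂ)) *
           J (w * ((s ^ ((1 : ℝ) / k) : ℝ) : ℂ)))‖ ≤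
        ∫ s in Ioo (0:ℝ) 1, A * B * Real.exp x * g₀ s := by
      apply MeasureTheory.norm_integral_le_of_norm_le hbInt
      rw [ae_restrict_iff' measurableSet_Ioo]
      filter_upwards with s hs
      exact hpoint s hs
    have hkb := kernel_bound ha ha1 hx
    have hABe : (0:ℝ) ≤ A * B * Real.exp x := by positivity
    have hfinal : ∫ s in Ioo (0:ℝ) 1, A * B * Real.exp x * g₀ s ≤
        A * B * Real.exp x *
          ((2:ℝ) ^ (4 - a) * (π / (2 * Real.sin (π * a / 2))) * (x ^ (-a) / (1 + x ^ 2))) := by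
      rw [MeasureTheory.integral_const_mul]
      exact mul_le_mul_of_nonneg_left hkb hABe
    have hxa' : x ^ a = μ * r := by
      rw [hx_def, ha_def, ← mul_pow]
      exact Real.pow_rpow_inv_natCast (by positivity) hk0
    have hxa : x ^ (-a) = (μ * r)⁻¹ := by
      rw [Real.rpow_neg hx.le, hxa']
    rw [hden2]
    calc ‖w * ∫ s in Ioo (0 : ℝ) 1,
          ((s * (1 - s)) ^ (a - 1) : ℝ) •
            (H (w * (((1 - s) ^ ((1 : ℝ) / k) : ℝ) : ℂ)) *
             J (w * ((s ^ ((1 : ℝ) / k) : ℝ) : ℂ)))‖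
        = r * ‖∫ s in Ioo (0 : ℝ) 1,
          ((s * (1 - s)) ^ (a - 1) : ℝ) •
            (H (w * (((1 - s) ^ ((1 : ℝ) / k) : ℝ) : ℂ)) *
             J (w * ((s ^ ((1 : ℝ) / k) : ℝ) : ℂ)))‖ := by rw [norm_mul]
      _ ≤ r * (A * B * Real.exp x *
          ((2:ℝ) ^ (4 - a) * (π / (2 * Real.sin (π * a / 2))) * (x ^ (-a) / (1 + x ^ 2)))) :=
          mul_le_mul_of_nonneg_left (hnormint.trans hfinal) hr.le
      _ = (2:ℝ) ^ (4 - a) * π / (2 * Real.sin (π * a / 2)) / μ * A * B * Real.exp x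
            / (1 + x ^ 2) := by
          rw [hxa]
          have hμ' : μ ≠ 0 := hμ.ne'
          have hr' : r ≠ 0 := hr.ne'
          have hs' : Real.sin (π * a / 2) ≠ 0 := hsin.ne'
          have hx2' : (1:ℝ) + x ^ 2 ≠ 0 := by positivity
          field_simp
end

section
/- Laplace transform of order k takes the order-k convolution to the pointwise product: for continuous H, J on [0,∞) with |H(w)|, |J(w)| ≤ C e^{μ^k w^k}/(1 + μ^{2k}w^{2k}), and for real x > 0 with x < μ^{-1}, one has ∫₀^∞ (H⋆ₖJ)(p) e^{-p^k/x^k} k dp = (∫₀^∞ H(w) e^{-w^k/x^k} k dw)·(∫₀^∞ J(u) e^{-u^k/x^k} k du), where (H⋆ₖJ)(p) = p∫₀¹ (s(1−s))^{(1−k)/k} H(p(1−s)^{1/k}) J(p s^{1/k}) ds. -/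
open Real Set MeasureTheory

set_option linter.unusedVariables false

section helpers

lemma aux_rpow_pow {k : ℕ} (hk : 1 ≤ k) {t : ℝ} (ht : 0 ≤ t) :
    (t ^ ((1:ℝ)/k)) ^ k = t := by
  have hk0 : (k:ℝ) ≠ 0 := Nat.cast_ne_zero.2 (by omega)
  rw [← Real.rpow_natCast (t ^ ((1:ℝ)/k)) k, ← Real.rpow_mul ht, one_div,
    inv_mul_cancel₀ hk0, Real.rpow_one]

lemma aux_pow_rpow {k : ℕ} (hk : 1 ≤ k) {t : ℝ} (ht : 0 ≤ t) :
    ((t ^ k : ℝ)) ^ ((1:ℝ)/k) = t := by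
  have hk0 : (k:ℝ) ≠ 0 := Nat.cast_ne_zero.2 (by omega)
  rw [← Real.rpow_natCast t k, ← Real.rpow_mul ht, mul_one_div,
    div_self hk0, Real.rpow_one]

lemma hasFDerivAt_phi {k : ℕ} (hk : 1 ≤ k) {p s : ℝ} (hs : s ∈ Ioo (0:ℝ) 1) :
    HasFDerivAt (fun q : ℝ×ℝ => (q.1 * (1 - q.2) ^ ((1:ℝ)/k), q.1 * q.2 ^ ((1:ℝ)/k)))
      (LinearMap.toContinuousLinearMap (Matrix.toLin (Module.Basis.finTwoProd ℝ) (Module.Basis.finTwoProd ℝ)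
        !![(1 - s) ^ ((1:ℝ)/k), p * (-((1:ℝ)/k * (1-s) ^ ((1:ℝ)/k - 1)));
           s ^ ((1:ℝ)/k), p * ((1:ℝ)/k * s ^ ((1:ℝ)/k - 1))])) (p, s) := by
  have h1 : HasDerivAt (fun y : ℝ => (1 - y) ^ ((1:ℝ)/k))
      (-((1:ℝ)/k * (1-s) ^ ((1:ℝ)/k - 1))) s := by
    have hbase : HasDerivAt (fun y : ℝ => (1 - y)) (-1 : ℝ) s := by
      simpa using (hasDerivAt_id s).const_sub 1
    have := (Real.hasDerivAt_rpow_const (x := 1 - s) (p := (1:ℝ)/k)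
      (Or.inl (by linarith [hs.2] : (1:ℝ) - s ≠ 0))).comp s hbase
    rw [show (-((1:ℝ)/k * (1-s) ^ ((1:ℝ)/k - 1))) = (1:ℝ)/k * (1-s) ^ ((1:ℝ)/k - 1) * -1 by ring]; exact this
  have h2 : HasDerivAt (fun y : ℝ => y ^ ((1:ℝ)/k))
      ((1:ℝ)/k * s ^ ((1:ℝ)/k - 1)) s :=
    Real.hasDerivAt_rpow_const (Or.inl (ne_of_gt hs.1))
  rw [Matrix.toLin_finTwoProd_toContinuousLinearMap]
  convert HasFDerivAt.prodMk (𝕜 := ℝ) (F := ℝ) (G := ℝ)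
    (hasFDerivAt_fst.mul (h1.comp_hasFDerivAt (p, s) hasFDerivAt_snd))
    (hasFDerivAt_fst.mul (h2.comp_hasFDerivAt (p, s) hasFDerivAt_snd)) using 2
  all_goals first | rfl | simp [smul_smul, add_comm, neg_mul, smul_neg, neg_smul _ (ContinuousLinearMap.snd ℝ ℝ ℝ)]

lemma phi_pow1 {k : ℕ} (hk : 1 ≤ k) {p s : ℝ} (hp : 0 ≤ p) (hs : s ∈ Ioo (0:ℝ) 1) :
    (p * (1 - s) ^ ((1:ℝ)/k)) ^ k = p ^ k * (1 - s) := by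
  rw [mul_pow, aux_rpow_pow hk (by linarith [hs.2] : (0:ℝ) ≤ 1 - s)]

lemma phi_pow2 {k : ℕ} (hk : 1 ≤ k) {p s : ℝ} (hp : 0 ≤ p) (hs : s ∈ Ioo (0:ℝ) 1) :
    (p * s ^ ((1:ℝ)/k)) ^ k = p ^ k * s := by
  rw [mul_pow, aux_rpow_pow hk hs.1.le]

lemma det_val {k : ℕ} (hk : 1 ≤ k) {s : ℝ} (hs : s ∈ Ioo (0:ℝ) 1) (p : ℝ) :
    (!![(1 - s) ^ ((1:ℝ)/k), p * (-((1:ℝ)/k * (1-s) ^ ((1:ℝ)/k - 1)));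
        s ^ ((1:ℝ)/k), p * ((1:ℝ)/k * s ^ ((1:ℝ)/k - 1))] : Matrix _ _ ℝ).det
      = p / k * (s * (1 - s)) ^ ((1:ℝ)/k - 1) := by
  have h1s : (0:ℝ) < 1 - s := by linarith [hs.2]
  have e1 : (1 - s) ^ ((1:ℝ)/k) = (1 - s) ^ ((1:ℝ)/k - 1) * (1 - s) := by
    nth_rewrite 1 [show (1:ℝ)/k = ((1:ℝ)/k - 1) + 1 by ring]
    rw [Real.rpow_add h1s, Real.rpow_one]
  have e2 : s ^ ((1:ℝ)/k) = s ^ ((1:ℝ)/k - 1) * s := by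
    nth_rewrite 1 [show (1:ℝ)/k = ((1:ℝ)/k - 1) + 1 by ring]
    rw [Real.rpow_add hs.1, Real.rpow_one]
  rw [Matrix.det_fin_two_of, Real.mul_rpow hs.1.le h1s.le, e1, e2]
  ring

lemma phi_injOn {k : ℕ} (hk : 1 ≤ k) :
    InjOn (fun q : ℝ×ℝ => (q.1 * (1 - q.2) ^ ((1:ℝ)/k), q.1 * q.2 ^ ((1:ℝ)/k)))
      (Ioi (0:ℝ) ×ˢ Ioo (0:ℝ) 1) := by
  rintro ⟨p, s⟩ ⟨hp, hs⟩ ⟨p', s'⟩ ⟨hp', hs'⟩ h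
  simp only [Prod.mk.injEq] at h
  have h1 : p ^ k * (1 - s) = p' ^ k * (1 - s') := by
    rw [← phi_pow1 hk (le_of_lt hp) hs, ← phi_pow1 hk (le_of_lt hp') hs', h.1]
  have h2 : p ^ k * s = p' ^ k * s' := by
    rw [← phi_pow2 hk (le_of_lt hp) hs, ← phi_pow2 hk (le_of_lt hp') hs', h.2]
  have hpk : p ^ k = p' ^ k := by nlinarith [h1, h2]
  have hpp : p = p' := (pow_left_strictMonoOn₀ (by omega : k ≠ 0)).injOn
    (le_of_lt hp) (le_of_lt hp') hpk
  have hpk0 : p ^ k ≠ 0 := pow_ne_zero k (ne_of_gt hp)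
  have hss : s = s' := by
    rw [hpp] at h2
    exact mul_left_cancel₀ (by rw [hpp] at hpk0; exact hpk0) h2
  simp [hpp, hss]

lemma phi_image {k : ℕ} (hk : 1 ≤ k) :
    (fun q : ℝ×ℝ => (q.1 * (1 - q.2) ^ ((1:ℝ)/k), q.1 * q.2 ^ ((1:ℝ)/k))) ''
      (Ioi (0:ℝ) ×ˢ Ioo (0:ℝ) 1) = Ioi (0:ℝ) ×ˢ Ioi (0:ℝ) := by
  apply Subset.antisymm
  · rintro _ ⟨⟨p, s⟩, ⟨hp, hs⟩, rfl⟩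
    have h1s : (0:ℝ) < 1 - s := by linarith [hs.2]
    exact ⟨mul_pos hp (Real.rpow_pos_of_pos h1s _),
      mul_pos hp (Real.rpow_pos_of_pos hs.1 _)⟩
  · rintro ⟨w, u⟩ ⟨hw, hu⟩
    simp only [mem_Ioi] at hw hu
    have hP : (0:ℝ) < w ^ k + u ^ k := by positivity
    refine ⟨((w ^ k + u ^ k) ^ ((1:ℝ)/k), u ^ k / (w ^ k + u ^ k)), ⟨?_, ?_, ?_⟩, ?_⟩
    · exact Real.rpow_pos_of_pos hP _
    · positivity
    · rw [div_lt_one hP]; nlinarith [pow_pos hw k]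
    · have h1 : 1 - u ^ k / (w ^ k + u ^ k) = w ^ k / (w ^ k + u ^ k) := by
        field_simp
        ring
      simp only [h1]
      have e1 : (w ^ k + u ^ k) ^ ((1:ℝ)/k) * (w ^ k / (w ^ k + u ^ k)) ^ ((1:ℝ)/k) = w := by
        rw [← Real.mul_rpow hP.le (by positivity), mul_div_cancel₀ _ (ne_of_gt hP),
          aux_pow_rpow hk hw.le]
      have e2 : (w ^ k + u ^ k) ^ ((1:ℝ)/k) * (u ^ k / (w ^ k + u ^ k)) ^ ((1:ℝ)/k) = u := by
        rw [← Real.mul_rpow hP.le (by positivity), mul_div_cancel₀ _ (ne_of_gt hP),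
          aux_pow_rpow hk hu.le]
      exact Prod.ext e1 e2

lemma integrable_aux {k : ℕ} (hk : 1 ≤ k) {μ C : ℝ} (hμ : 0 < μ)
    {H : ℝ → ℂ} (hHc : ContinuousOn H (Ici 0))
    (hH : ∀ w : ℝ, 0 ≤ w →
      ‖H w‖ ≤ C * Real.exp (μ ^ k * w ^ k) / (1 + μ ^ (2 * k) * w ^ (2 * k)))
    {x : ℝ} (hx : 0 < x) (hxμ : x < μ⁻¹) :
    IntegrableOn (fun w => H w * ((Real.exp (-(w ^ k / x ^ k)) : ℝ) : ℂ)) (Ioi 0) := by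
  have hC0 : 0 ≤ C := by
    have h0 := hH 0 le_rfl
    simp [zero_pow (show k ≠ 0 by omega), zero_pow (show 2*k ≠ 0 by omega)] at h0
    exact le_trans (norm_nonneg _) h0
  have hμx : μ < x⁻¹ := by
    rw [← inv_inv μ]; exact inv_strictAnti₀ hx hxμ
  have hc : 0 < 1 / x ^ k - μ ^ k := by
    have : μ ^ k < (x⁻¹) ^ k := pow_lt_pow_left₀ hμx hμ.le (by omega)
    rw [inv_pow] at this
    rw [one_div]; linarith
  set c : ℝ := 1 / x ^ k - μ ^ k with hcdef
  have hmeas : AEStronglyMeasurable (fun w => H w * ((Real.exp (-(w ^ k / x ^ k)) : ℝ) : ℂ))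
      (volume.restrict (Ioi (0:ℝ))) := by
    apply ContinuousOn.aestronglyMeasurable _ measurableSet_Ioi
    apply ContinuousOn.mul (hHc.mono Ioi_subset_Ici_self)
    apply Continuous.continuousOn
    continuity
  have hint : IntegrableOn (fun w : ℝ => (C * Real.exp c) * Real.exp (-(c * w))) (Ioi 0) := by
    have := (exp_neg_integrableOn_Ioi 0 hc)
    simpa [neg_mul, IntegrableOn] using this.const_mul (C * Real.exp c)
  refine hint.integrable.mono' hmeas ?_
  rw [ae_restrict_iff' measurableSet_Ioi]
  filter_upwards with w hw
  simp only [mem_Ioi] at hw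
  have hnorm : ‖H w * ((Real.exp (-(w ^ k / x ^ k)) : ℝ) : ℂ)‖
      = ‖H w‖ * Real.exp (-(w ^ k / x ^ k)) := by
    rw [norm_mul, Complex.norm_real, Real.norm_eq_abs, Real.abs_exp]
  rw [hnorm]
  have h1 : ‖H w‖ * Real.exp (-(w ^ k / x ^ k)) ≤ C * Real.exp (-(c * w ^ k)) := by
    calc ‖H w‖ * Real.exp (-(w ^ k / x ^ k))
        ≤ (C * Real.exp (μ ^ k * w ^ k) / (1 + μ ^ (2*k) * w ^ (2*k)))
            * Real.exp (-(w ^ k / x ^ k)) := by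
          apply mul_le_mul_of_nonneg_right (hH w hw.le) (Real.exp_nonneg _)
      _ ≤ (C * Real.exp (μ ^ k * w ^ k)) * Real.exp (-(w ^ k / x ^ k)) := by
          apply mul_le_mul_of_nonneg_right _ (Real.exp_nonneg _)
          apply div_le_self (by positivity)
          have : 0 ≤ μ ^ (2*k) * w ^ (2*k) := by positivity
          linarith
      _ = C * Real.exp (-(c * w ^ k)) := by
          rw [mul_assoc, ← Real.exp_add]
          congr 1
          rw [hcdef]; ring
  have h2 : Real.exp (-(c * w ^ k)) ≤ Real.exp c * Real.exp (-(c * w)) := by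
    rw [← Real.exp_add, Real.exp_le_exp]
    have hwk : w ≤ 1 + w ^ k := by
      rcases le_total w 1 with h | h
      · have : (0:ℝ) ≤ w ^ k := by positivity
        linarith
      · have := le_self_pow₀ h (by omega : k ≠ 0)
        linarith
    nlinarith [hc, hwk]
  calc ‖H w‖ * Real.exp (-(w ^ k / x ^ k)) ≤ C * Real.exp (-(c * w ^ k)) := h1
    _ ≤ C * (Real.exp c * Real.exp (-(c * w))) := by
        apply mul_le_mul_of_nonneg_left h2 hC0
    _ = (C * Real.exp c) * Real.exp (-(c * w)) := by ring

end helpers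

/-- The order-`k` Laplace transform takes the order-`k` convolution to the product:
`L_k(H ⋆ₖ J)(x) = L_k(H)(x) · L_k(J)(x)` for `0 < x < μ⁻¹`. -/
theorem stmt_9 (k : ℕ) (hk : 1 ≤ k) (μ C : ℝ) (hμ : 0 < μ) (hC : 0 < C)
    (H J : ℝ → ℂ) (hHc : ContinuousOn H (Ici 0)) (hJc : ContinuousOn J (Ici 0))
    (hH : ∀ w : ℝ, 0 ≤ w →
      ‖H w‖ ≤ C * Real.exp (μ ^ k * w ^ k) / (1 + μ ^ (2 * k) * w ^ (2 * k)))
    (hJ : ∀ w : ℝ, 0 ≤ w →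
      ‖J w‖ ≤ C * Real.exp (μ ^ k * w ^ k) / (1 + μ ^ (2 * k) * w ^ (2 * k)))
    (x : ℝ) (hx : 0 < x) (hxμ : x < μ⁻¹) :
    (∫ p in Ioi (0 : ℝ),
        ((p : ℂ) * ∫ s in Ioo (0 : ℝ) 1,
            ((s * (1 - s)) ^ (((1 : ℝ) - k) / k) : ℝ) •
              (H (p * (1 - s) ^ ((1 : ℝ) / k)) * J (p * s ^ ((1 : ℝ) / k))))
          * Complex.exp (-((p : ℂ) ^ k / (x : ℂ) ^ k)) * k)
      = (∫ w in Ioi (0 : ℝ), H w * Complex.exp (-((w : ℂ) ^ k / (x : ℂ) ^ k)) * k) *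
        (∫ u in Ioi (0 : ℝ), J u * Complex.exp (-((u : ℂ) ^ k / (x : ℂ) ^ k)) * k) := by
  have hk0 : (k:ℝ) ≠ 0 := Nat.cast_ne_zero.2 (by omega)
  have hkC : (k:ℂ) ≠ 0 := Nat.cast_ne_zero.2 (by omega)
  have cexp_eq : ∀ t : ℝ, Complex.exp (-((t:ℂ) ^ k / (x:ℂ) ^ k))
      = ((Real.exp (-(t ^ k / x ^ k)) : ℝ) : ℂ) := by
    intro t
    rw [← Complex.ofReal_pow, ← Complex.ofReal_pow, ← Complex.ofReal_div,
      ← Complex.ofReal_neg, Complex.ofReal_exp]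
  simp_rw [cexp_eq]
  set φ : ℝ×ℝ → ℝ×ℝ := fun q => (q.1 * (1 - q.2) ^ ((1:ℝ)/k), q.1 * q.2 ^ ((1:ℝ)/k)) with hφ
  set T : Set (ℝ×ℝ) := Ioi (0:ℝ) ×ˢ Ioo (0:ℝ) 1 with hTdef
  set A : ℝ×ℝ → (ℝ×ℝ →L[ℝ] ℝ×ℝ) := fun q =>
    LinearMap.toContinuousLinearMap (Matrix.toLin (Module.Basis.finTwoProd ℝ) (Module.Basis.finTwoProd ℝ)
      !![(1 - q.2) ^ ((1:ℝ)/k), q.1 * (-((1:ℝ)/k * (1-q.2) ^ ((1:ℝ)/k - 1)));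
         q.2 ^ ((1:ℝ)/k), q.1 * ((1:ℝ)/k * q.2 ^ ((1:ℝ)/k - 1))]) with hA
  have hTm : MeasurableSet T := measurableSet_Ioi.prod measurableSet_Ioo
  have hderiv : ∀ q ∈ T, HasFDerivWithinAt φ (A q) T q := fun q hq =>
    (hasFDerivAt_phi hk hq.2).hasFDerivWithinAt
  have hinj : InjOn φ T := phi_injOn hk
  have hdet : ∀ q ∈ T, (A q).det = q.1 / k * (q.2 * (1 - q.2)) ^ ((1:ℝ)/k - 1) := by
    intro q hq
    simp only [hA, LinearMap.det_toContinuousLinearMap, LinearMap.det_toLin]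
    exact det_val hk hq.2 q.1
  set fH : ℝ → ℂ := fun w => H w * ((Real.exp (-(w ^ k / x ^ k)) : ℝ) : ℂ) * (k:ℂ) with hfH
  set fJ : ℝ → ℂ := fun u => J u * ((Real.exp (-(u ^ k / x ^ k)) : ℝ) : ℂ) * (k:ℂ) with hfJ
  set G : ℝ×ℝ → ℂ := fun z => fH z.1 * fJ z.2 with hG
  set F : ℝ×ℝ → ℂ := fun q =>
    (((q.2 * (1 - q.2)) ^ (((1:ℝ) - k)/k) : ℝ) • (H (φ q).1 * J (φ q).2))
      * ((q.1:ℂ) * ((Real.exp (-(q.1 ^ k / x ^ k)) : ℝ) : ℂ) * (k:ℂ)) with hF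
  have hexp : ((1:ℝ) - k)/k = (1:ℝ)/k - 1 := by field_simp
  -- the key pointwise identity
  have key : ∀ q ∈ T, |(A q).det| • G (φ q) = F q := by
    rintro ⟨p, s⟩ ⟨hp, hs⟩
    have hp' : (0:ℝ) < p := hp
    have h1s : (0:ℝ) < 1 - s := by linarith [hs.2]
    have hdpos : 0 < p / k * (s * (1 - s)) ^ ((1:ℝ)/k - 1) :=
      mul_pos (div_pos hp' (by exact_mod_cast Nat.pos_of_ne_zero (by omega)))
        (Real.rpow_pos_of_pos (mul_pos hs.1 h1s) _)
    rw [hdet _ ⟨hp, hs⟩, abs_of_pos hdpos]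
    simp only [hG, hF, hfH, hfJ, hφ]
    rw [phi_pow1 hk hp'.le hs, phi_pow2 hk hp'.le hs]
    have hee : ((Real.exp (-(p^k*(1-s)/x^k)) : ℝ) : ℂ) * ((Real.exp (-(p^k*s/x^k)) : ℝ) : ℂ)
        = ((Real.exp (-(p^k/x^k)) : ℝ) : ℂ) := by
      rw [← Complex.ofReal_mul, ← Real.exp_add]
      norm_cast
      congr 1
      ring
    have hkk : (k:ℂ) * (k:ℂ)⁻¹ = 1 := mul_inv_cancel₀ hkC
    have hXX : (s*(1-s)) ^ ((1:ℝ)/k - 1) = (s*(1-s)) ^ (((1:ℝ) - k)/k) := by rw [hexp]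
    have hframe : ((p / (k:ℝ) * (s*(1-s)) ^ ((1:ℝ)/k - 1) : ℝ) : ℂ)
        = (p:ℂ) * (((s*(1-s)) ^ (((1:ℝ) - k)/k) : ℝ) : ℂ) / (k:ℂ) := by
      rw [hXX]; push_cast; ring
    rw [Complex.real_smul, Complex.real_smul, hframe]
    linear_combination ((p:ℂ) * (((s*(1-s)) ^ (((1:ℝ) - k)/k) : ℝ) : ℂ) *
        H (p * (1 - s) ^ ((1:ℝ)/k)) * J (p * s ^ ((1:ℝ)/k)) * (k:ℂ) * (k:ℂ) / (k:ℂ)) * hee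
      + ((((s*(1-s)) ^ (((1:ℝ) - k)/k) : ℝ) : ℂ) * H (p * (1 - s) ^ ((1:ℝ)/k))
          * J (p * s ^ ((1:ℝ)/k)) * (p:ℂ) * ((Real.exp (-(p^k/x^k)) : ℝ) : ℂ) * (k:ℂ)) * hkk
  -- integrability
  have hHint : Integrable fH (volume.restrict (Ioi (0:ℝ))) :=
    (integrable_aux hk hμ hHc hH hx hxμ).mul_const _
  have hJint : Integrable fJ (volume.restrict (Ioi (0:ℝ))) :=
    (integrable_aux hk hμ hJc hJ hx hxμ).mul_const _
  have hGint : IntegrableOn G (Ioi (0:ℝ) ×ˢ Ioi (0:ℝ)) volume := by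
    rw [IntegrableOn, Measure.volume_eq_prod, ← Measure.prod_restrict]
    exact hHint.mul_prod hJint
  have hFT : IntegrableOn F T volume := by
    have h1 : IntegrableOn G (φ '' T) volume := by rw [phi_image hk]; exact hGint
    have h2 := (integrableOn_image_iff_integrableOn_abs_det_fderiv_smul volume hTm
      hderiv hinj G).1 h1
    exact h2.congr_fun key hTm
  calc (∫ p in Ioi (0:ℝ),
        ((p : ℂ) * ∫ s in Ioo (0 : ℝ) 1,
            ((s * (1 - s)) ^ (((1 : ℝ) - k) / k) : ℝ) •
              (H (p * (1 - s) ^ ((1 : ℝ) / k)) * J (p * s ^ ((1 : ℝ) / k))))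
          * ((Real.exp (-(p ^ k / x ^ k)) : ℝ) : ℂ) * (k:ℂ))
      = ∫ p in Ioi (0:ℝ), ∫ s in Ioo (0:ℝ) 1, F (p, s) := by
        refine setIntegral_congr_fun measurableSet_Ioi fun p _ => ?_
        rw [show (fun s => F (p, s)) = fun s =>
          (((s * (1 - s)) ^ (((1:ℝ) - k)/k) : ℝ) •
              (H (p * (1 - s) ^ ((1:ℝ)/k)) * J (p * s ^ ((1:ℝ)/k))))
            * ((p:ℂ) * ((Real.exp (-(p ^ k / x ^ k)) : ℝ) : ℂ) * (k:ℂ)) from rfl]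
        rw [integral_mul_const]
        ring
    _ = ∫ q in T, F q := by
        rw [hTdef, Measure.volume_eq_prod, setIntegral_prod _ ?_]
        rw [← Measure.volume_eq_prod]
        exact hFT
    _ = ∫ q in T, |(A q).det| • G (φ q) := (setIntegral_congr_fun hTm key).symm
    _ = ∫ z in φ '' T, G z :=
        (integral_image_eq_integral_abs_det_fderiv_smul volume hTm hderiv hinj G).symm
    _ = ∫ z in Ioi (0:ℝ) ×ˢ Ioi (0:ℝ), G z := by rw [phi_image hk]
    _ = (∫ w in Ioi (0:ℝ), fH w) * (∫ u in Ioi (0:ℝ), fJ u) := by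
        rw [Measure.volume_eq_prod, setIntegral_prod_mul]
end

section
/- Differentiation identity for the order-k Laplace transform: if H : (0,∞) → ℂ is continuous with |H(w)| ≤ C e^{μ^k w^k} and x ∈ (0, μ^{-1}), then (1/k)·x^{k+1}·d/dx [∫₀^∞ H(w)e^{-w^k/x^k} k dw] = ∫₀^∞ w^k H(w) e^{-w^k/x^k} k dw. -/
open Real Set MeasureTheory

lemma aux_hasDerivAt (k : ℕ) (hk : 1 ≤ k) (c : ℂ) (w : ℝ) (y : ℝ) (hy : y ≠ 0) :
    HasDerivAt (fun y : ℝ => c * Complex.exp (-((w:ℂ)^k / (y:ℂ)^k)) * (k:ℂ))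
      (c * (Complex.exp (-((w:ℂ)^k / (y:ℂ)^k)) * ((k:ℂ) * (w:ℂ)^k / (y:ℂ)^(k+1))) * (k:ℂ)) y := by
  have hyC : (y:ℂ) ≠ 0 := by exact_mod_cast hy
  have hpow : ((y:ℂ))^k ≠ 0 := pow_ne_zero _ hyC
  have h1 : HasDerivAt (fun z : ℂ => (w:ℂ)^k / z^k)
      ((0 * (y:ℂ)^k - (w:ℂ)^k * ((k:ℕ) * (y:ℂ)^(k-1))) / ((y:ℂ)^k)^2) (y:ℂ) :=
    (hasDerivAt_const _ _).div (hasDerivAt_pow k (y:ℂ)) hpow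
  have h2 := ((h1.neg).cexp.const_mul c).mul_const ((k:ℕ):ℂ)
  have h3 := h2.comp_ofReal
  convert h3 using 1
  · rfl
  field_simp
  ring_nf
  rw [show k*2 = 1 + k + (k-1) from by omega, pow_add, pow_add, pow_one]
  simp only [Pi.neg_apply]
  ring

lemma aux_norm (k : ℕ) (c : ℂ) (w y : ℝ) :
    ‖c * (Complex.exp (-((w:ℂ)^k / (y:ℂ)^k)) * ((k:ℂ) * (w:ℂ)^k / (y:ℂ)^(k+1))) * (k:ℂ)‖
      = ‖c‖ * (Real.exp (-(w^k / y^k)) * |k * w^k / y^(k+1)|) * k := by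
  have h1 : -((w:ℂ)^k / (y:ℂ)^k) = ((-(w^k / y^k) : ℝ) : ℂ) := by push_cast; ring
  have h2 : (k:ℂ) * (w:ℂ)^k / (y:ℂ)^(k+1) = (((k:ℝ) * w^k / y^(k+1) : ℝ) : ℂ) := by push_cast; ring
  rw [norm_mul, norm_mul, norm_mul, h1, h2, Complex.norm_exp_ofReal, Complex.norm_real, Complex.norm_natCast, Real.norm_eq_abs]

lemma aux_norm2 (k : ℕ) (c : ℂ) (w y : ℝ) :
    ‖c * Complex.exp (-((w:ℂ)^k / (y:ℂ)^k)) * (k:ℂ)‖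
      = ‖c‖ * Real.exp (-(w^k / y^k)) * k := by
  have h1 : -((w:ℂ)^k / (y:ℂ)^k) = ((-(w^k / y^k) : ℝ) : ℂ) := by push_cast; ring
  rw [norm_mul, norm_mul, h1, Complex.norm_exp_ofReal, Complex.norm_natCast]

/-- Differentiation identity for the order-`k` Laplace transform:
`(1/k) x^(k+1) d/dx [∫₀^∞ H(w) e^(-w^k/x^k) k dw] = ∫₀^∞ w^k H(w) e^(-w^k/x^k) k dw`. -/
theorem stmt_11 (k : ℕ) (hk : 1 ≤ k) (μ C : ℝ) (hμ : 0 < μ) (hC : 0 < C)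
    (H : ℝ → ℂ) (hHc : ContinuousOn H (Ioi 0))
    (hH : ∀ w : ℝ, 0 < w → ‖H w‖ ≤ C * Real.exp (μ ^ k * w ^ k))
    (x : ℝ) (hx : 0 < x) (hxμ : x < μ⁻¹) :
    ∃ D : ℂ,
      HasDerivAt (fun y : ℝ =>
        ∫ w in Ioi (0 : ℝ), H w * Complex.exp (-((w : ℂ) ^ k / (y : ℂ) ^ k)) * k) D x ∧
      (1 / k : ℂ) * (x : ℂ) ^ (k + 1) * D
        = ∫ w in Ioi (0 : ℝ), (w : ℂ) ^ k * H w * Complex.exp (-((w : ℂ) ^ k / (x : ℂ) ^ k)) * k := by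
  have hkR : (1:ℝ) ≤ (k:ℝ) := by exact_mod_cast hk
  have hkne : k ≠ 0 := by omega
  -- set up the interval
  set ε : ℝ := min (x/2) ((μ⁻¹ - x)/2) with hεdef
  have hε : 0 < ε := lt_min (by linarith) (by linarith)
  set δ : ℝ := x - ε with hδdef
  have hδ : 0 < δ := by
    have : ε ≤ x/2 := min_le_left _ _
    simp only [hδdef]; linarith
  set b : ℝ := x + ε with hbdef
  have hb : 0 < b := by simp only [hbdef]; linarith
  have hbμ : b < μ⁻¹ := by
    have : ε ≤ (μ⁻¹ - x)/2 := min_le_right _ _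
    simp only [hbdef]; linarith
  have hμb : μ < b⁻¹ := by
    have := inv_strictAnti₀ hb hbμ
    rwa [inv_inv] at this
  have hμx : μ < x⁻¹ := by
    have := inv_strictAnti₀ hx hxμ
    rwa [inv_inv] at this
  set c1 : ℝ := b⁻¹^k - μ^k with hc1def
  have hc1 : 0 < c1 := by
    have := pow_lt_pow_left₀ hμb hμ.le hkne
    simp only [hc1def]; linarith
  set c0 : ℝ := x⁻¹^k - μ^k with hc0def
  have hc0 : 0 < c0 := by
    have := pow_lt_pow_left₀ hμx hμ.le hkne
    simp only [hc0def]; linarith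
  -- the family and its derivative
  set F : ℝ → ℝ → ℂ := fun y w => H w * Complex.exp (-((w:ℂ)^k / (y:ℂ)^k)) * (k:ℂ) with hF
  set F' : ℝ → ℝ → ℂ := fun y w =>
    H w * (Complex.exp (-((w:ℂ)^k / (y:ℂ)^k)) * ((k:ℂ) * (w:ℂ)^k / (y:ℂ)^(k+1))) * (k:ℂ) with hF'
  set bound : ℝ → ℝ := fun w => C * k^2 / δ^(k+1) * (w^k * Real.exp (-c1 * w^k)) with hbound
  have hcont : ∀ y : ℝ, Continuous (fun w : ℝ => Complex.exp (-((w:ℂ)^k / (y:ℂ)^k))) :=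
    fun y => (((Complex.continuous_ofReal.pow k).div_const ((y:ℂ)^k)).neg).cexp
  -- measurability of F y for y near x
  have hF_meas : ∀ᶠ y in nhds x, AEStronglyMeasurable (F y) (volume.restrict (Ioi 0)) := by
    filter_upwards [Metric.ball_mem_nhds x hε] with y _hy
    exact ((hHc.mul (hcont y).continuousOn).mul continuousOn_const).aestronglyMeasurable
      measurableSet_Ioi
  -- integrability of F x
  have hF_int : Integrable (F x) (volume.restrict (Ioi 0)) := by
    have base : IntegrableOn (fun w : ℝ => w ^ (0:ℝ) * Real.exp (-c0 * w ^ ((k:ℕ):ℝ))) (Ioi 0) :=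
      integrableOn_rpow_mul_exp_neg_mul_rpow (by norm_num) (by exact_mod_cast hk) hc0
    have base' : IntegrableOn (fun w : ℝ => Real.exp (-c0 * w ^ k)) (Ioi 0) := by
      refine base.congr_fun (fun w _hw => ?_) measurableSet_Ioi
      simp only [Real.rpow_zero, Real.rpow_natCast, one_mul]
    refine Integrable.mono' (base'.const_mul (C * k)) ?_ ?_
    · exact ((hHc.mul (hcont x).continuousOn).mul continuousOn_const).aestronglyMeasurable
        measurableSet_Ioi
    · rw [ae_restrict_iff' measurableSet_Ioi]
      refine Filter.Eventually.of_forall fun w hw => ?_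
      have hw' : 0 < w := hw
      have hexp0 : Real.exp (μ^k * w^k) * Real.exp (-(w^k / x^k)) = Real.exp (-c0 * w^k) := by
        rw [← Real.exp_add]
        congr 1
        rw [div_eq_mul_inv, ← inv_pow, hc0def]
        ring
      calc ‖F x w‖ = ‖H w‖ * Real.exp (-(w^k / x^k)) * k := aux_norm2 k (H w) w x
        _ ≤ C * Real.exp (μ^k * w^k) * Real.exp (-(w^k / x^k)) * k := by
            gcongr
            exact hH w hw'
        _ = C * k * Real.exp (-c0 * w^k) := by rw [← hexp0]; ring
  -- measurability of F' x
  have hF'_meas : AEStronglyMeasurable (F' x) (volume.restrict (Ioi 0)) := by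
    have : Continuous (fun w : ℝ =>
        Complex.exp (-((w:ℂ)^k / (x:ℂ)^k)) * ((k:ℂ) * (w:ℂ)^k / (x:ℂ)^(k+1))) :=
      (hcont x).mul (((continuous_const.mul (Complex.continuous_ofReal.pow k)).div_const _))
    exact ((hHc.mul this.continuousOn).mul continuousOn_const).aestronglyMeasurable
      measurableSet_Ioi
  -- the uniform bound
  have h_bound : ∀ᵐ w ∂(volume.restrict (Ioi 0)), ∀ y ∈ Metric.ball x ε, ‖F' y w‖ ≤ bound w := by
    rw [ae_restrict_iff' measurableSet_Ioi]
    refine Filter.Eventually.of_forall fun w hw y hy => ?_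
    have hw' : 0 < w := hw
    rw [Metric.mem_ball, Real.dist_eq, abs_sub_lt_iff] at hy
    have hyδ : δ < y := by simp only [hδdef]; linarith [hy.2]
    have hyb : y < b := by simp only [hbdef]; linarith [hy.1]
    have hy0 : 0 < y := hδ.trans hyδ
    have hexp1 : Real.exp (μ^k * w^k) * Real.exp (-(w^k / b^k)) = Real.exp (-c1 * w^k) := by
      rw [← Real.exp_add]
      congr 1
      rw [div_eq_mul_inv, ← inv_pow, hc1def]
      ring
    calc ‖F' y w‖ = ‖H w‖ * (Real.exp (-(w^k / y^k)) * |k * w^k / y^(k+1)|) * k :=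
          aux_norm k (H w) w y
      _ = ‖H w‖ * (Real.exp (-(w^k / y^k)) * (k * w^k / y^(k+1))) * k := by
          rw [abs_of_nonneg (by positivity)]
      _ ≤ (C * Real.exp (μ^k * w^k)) * (Real.exp (-(w^k / b^k)) * (k * w^k / δ^(k+1))) * k := by
          have e1 : Real.exp (-(w^k / y^k)) ≤ Real.exp (-(w^k / b^k)) :=
            Real.exp_le_exp.mpr (neg_le_neg (div_le_div_of_nonneg_left (by positivity)
              (by positivity) (pow_le_pow_left₀ hy0.le hyb.le k)))
          have e2 : (k : ℝ) * w^k / y^(k+1) ≤ (k : ℝ) * w^k / δ^(k+1) :=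
            div_le_div_of_nonneg_left (by positivity) (by positivity)
              (pow_le_pow_left₀ hδ.le hyδ.le (k+1))
          have e3 : ‖H w‖ ≤ C * Real.exp (μ^k * w^k) := hH w hw'
          gcongr <;> first | exact e1 | exact e2 | exact e3 | positivity
      _ = bound w := by simp only [hbound]; rw [← hexp1]; ring
  -- integrability of the bound
  have bound_int : Integrable bound (volume.restrict (Ioi 0)) := by
    have base : IntegrableOn (fun w : ℝ => w ^ ((k:ℕ):ℝ) * Real.exp (-c1 * w ^ ((k:ℕ):ℝ))) (Ioi 0) :=
      integrableOn_rpow_mul_exp_neg_mul_rpow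
        (neg_one_lt_zero.trans_le (Nat.cast_nonneg k)) (by exact_mod_cast hk) hc1
    have base' : IntegrableOn (fun w : ℝ => w^k * Real.exp (-c1 * w^k)) (Ioi 0) := by
      refine base.congr_fun (fun w _hw => ?_) measurableSet_Ioi
      norm_num [Real.rpow_natCast]
    exact base'.const_mul _
  -- differentiability
  have h_diff : ∀ᵐ w ∂(volume.restrict (Ioi 0)), ∀ y ∈ Metric.ball x ε,
      HasDerivAt (fun y => F y w) (F' y w) y := by
    refine Filter.Eventually.of_forall fun w y hy => ?_
    rw [Metric.mem_ball, Real.dist_eq, abs_sub_lt_iff] at hy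
    have hy0 : 0 < y := by
      have : ε ≤ x/2 := min_le_left _ _
      linarith [hy.2]
    exact aux_hasDerivAt k hk (H w) w y hy0.ne'
  obtain ⟨-, hD⟩ := hasDerivAt_integral_of_dominated_loc_of_deriv_le (Metric.ball_mem_nhds x hε) hF_meas hF_int hF'_meas
    h_bound bound_int h_diff
  refine ⟨_, hD, ?_⟩
  rw [← integral_const_mul]
  refine integral_congr_ae (Filter.Eventually.of_forall fun w => ?_)
  have hxC : ((x:ℂ))^(k+1) ≠ 0 := pow_ne_zero _ (by exact_mod_cast hx.ne')
  have hkC : ((k:ℕ):ℂ) ≠ 0 := by exact_mod_cast hkne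
  simp only [hF']
  field_simp
end

section
/- The entire function H(w) = Σ_{m=1}^∞ w^{m−1}/Γ(m/k) satisfies the global bound |H(w)| ≤ 6k(1+|w|^{2k})e^{|w|^k} for all w ∈ ℂ. -/
open Real Complex
open scoped Nat

lemma aux_one_le_Gamma {t : ℝ} (ht : 2 ≤ t) : 1 ≤ Real.Gamma t := by
  have := Real.Gamma_strictMonoOn_Ici.monotoneOn (by simp : (2:ℝ) ∈ Set.Ici 2)
    (Set.mem_Ici.mpr ht) ht
  rwa [Real.Gamma_two] at this

lemma aux_half_le_Gamma {t : ℝ} (h0 : 0 < t) (h2 : t ≤ 2) : 1/2 ≤ Real.Gamma t := by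
  rcases le_or_gt 1 t with h1 | h1
  · have h := Real.Gamma_add_one (ne_of_gt h0)
    have hG1 : 1 ≤ Real.Gamma (t + 1) := aux_one_le_Gamma (by linarith)
    have hGpos : 0 < Real.Gamma t := Real.Gamma_pos_of_pos h0
    rw [h] at hG1
    nlinarith
  · have h := Real.Gamma_add_one (ne_of_gt h0)
    have h' := Real.Gamma_add_one (s := t + 1) (by positivity)
    have hG1 : 1 ≤ Real.Gamma (t + 1 + 1) := aux_one_le_Gamma (by linarith)
    have hGpos : 0 < Real.Gamma t := Real.Gamma_pos_of_pos h0
    rw [h', h] at hG1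
    nlinarith [mul_lt_mul_of_pos_left h1 h0, mul_pos h0 hGpos]

lemma aux_factorial_le_Gamma {l : ℕ} {t : ℝ} (hl : 1 ≤ l) (h : (l : ℝ) + 1 ≤ t) :
    (l ! : ℝ) ≤ Real.Gamma t := by
  have h2 : (2:ℝ) ≤ (l:ℝ) + 1 := by
    have : (1:ℝ) ≤ l := by exact_mod_cast hl
    linarith
  have := Real.Gamma_strictMonoOn_Ici.monotoneOn (Set.mem_Ici.mpr h2)
    (Set.mem_Ici.mpr (h2.trans h)) h
  rwa [Real.Gamma_nat_eq_factorial] at this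

set_option maxHeartbeats 1600000 in
/-- The entire function `H(w) = Σ_{m≥1} w^(m−1)/Γ(m/k)` satisfies
`|H(w)| ≤ 6k(1+|w|^(2k)) e^(|w|^k)` for all `w ∈ ℂ`. -/
theorem stmt_12 (k : ℕ) (hk : 1 ≤ k) (w : ℂ) :
    ‖∑' m : ℕ, w ^ m / (Real.Gamma ((m + 1) / k) : ℂ)‖
      ≤ 6 * k * (1 + ‖w‖ ^ (2 * k)) * Real.exp (‖w‖ ^ k) := by
  have hk0 : (0:ℝ) < k := by exact_mod_cast hk
  haveI : NeZero k := ⟨by omega⟩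
  set r : ℝ := ‖w‖ with hr_def
  have hr : 0 ≤ r := norm_nonneg w
  set x : ℝ := r ^ k with hx_def
  set X : ℝ := r ^ (2 * k) with hX_def
  have hx : 0 ≤ x := by positivity
  have hX : 0 ≤ X := by positivity
  -- Gamma positivity
  have hGpos : ∀ m : ℕ, 0 < Real.Gamma (((m:ℝ) + 1) / k) := by
    intro m
    apply Real.Gamma_pos_of_pos
    positivity
  set F : ℕ → ℝ := fun m => r ^ m / Real.Gamma (((m:ℝ) + 1) / k) with hF_def
  have hFnonneg : ∀ m, 0 ≤ F m := fun m => div_nonneg (by positivity) (hGpos m).le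
  have hnorm : ∀ m : ℕ, ‖w ^ m / (Real.Gamma ((m + 1) / k) : ℂ)‖ = F m := by
    intro m
    rw [norm_div, norm_pow, Complex.norm_real, Real.norm_eq_abs, abs_of_pos (hGpos m)]
  -- bound for small powers
  have hpow : ∀ m : ℕ, m ≤ 2 * k → r ^ m ≤ 1 + X := by
    intro m hm
    rcases le_or_gt r 1 with h1 | h1
    · have : r ^ m ≤ 1 := pow_le_one₀ hr h1
      linarith
    · have : r ^ m ≤ r ^ (2 * k) := pow_le_pow_right₀ h1.le hm
      rw [← hX_def] at this
      have : r ^ m ≤ X := this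
      nlinarith
  -- the auxiliary exp series
  set h : ℕ → ℝ := fun l => x ^ (l + 1) / (l + 1)! with hh_def
  have hhnonneg : ∀ l, 0 ≤ h l := fun l => by
    simp only [hh_def]; positivity
  have hh_sum : Summable h := by
    have := Real.summable_pow_div_factorial x
    exact (summable_nat_add_iff 1).mpr this
  have hh_tsum : ∑' l, h l ≤ Real.exp x := by
    apply Summable.tsum_le_of_sum_range_le hh_sum
    intro n
    have H := Real.sum_le_exp_of_nonneg hx (n + 1)
    rw [Finset.sum_range_succ'] at H
    have h0 : (0:ℝ) ≤ x ^ 0 / (0)! := by positivity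
    calc ∑ i ∈ Finset.range n, h i = ∑ i ∈ Finset.range n, x ^ (i+1) / (i+1)! := rfl
      _ ≤ Real.exp x := by linarith
  -- tail term bound
  have htail : ∀ j : ℕ, F (2 * k + j) ≤ (1 + X) * h (j / k) := by
    intro j
    set l : ℕ := j / k + 1 with hl_def
    have hl1 : 1 ≤ l := Nat.le_add_left 1 _
    have hdiv : k * (j / k) ≤ j := Nat.mul_div_le j k
    -- Gamma lower bound
    have hGam' : (l ! : ℝ) ≤ Real.Gamma ((((2 * k + j : ℕ) : ℝ) + 1) / k) := by
      apply aux_factorial_le_Gamma hl1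
      rw [le_div_iff₀ hk0]
      push_cast [hl_def]
      have : (k : ℝ) * ((j / k : ℕ) : ℝ) ≤ (j : ℝ) := by exact_mod_cast hdiv
      ring_nf
      nlinarith
    -- power bound
    have hrpow : r ^ (2 * k + j) ≤ (1 + X) * x ^ l := by
      have hsplit : 2 * k + j = (k * (j / k) + k) + (k + j % k) := by
        have := Nat.div_add_mod j k
        omega
      have hxl : x ^ l = r ^ (k * (j / k) + k) := by
        rw [hx_def, ← pow_mul, hl_def]
        ring_nf
      have hle : r ^ (k + j % k) ≤ 1 + X := by
        apply hpow
        have : j % k < k := Nat.mod_lt j (by omega)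
        omega
      calc r ^ (2 * k + j) = r ^ (k * (j / k) + k) * r ^ (k + j % k) := by
            rw [← pow_add, ← hsplit]
        _ ≤ r ^ (k * (j / k) + k) * (1 + X) := by
            apply mul_le_mul_of_nonneg_left hle (by positivity)
        _ = (1 + X) * x ^ l := by rw [hxl]; ring
    have hfac : (0:ℝ) < (l ! : ℝ) := by exact_mod_cast Nat.factorial_pos l
    have : F (2 * k + j) ≤ ((1 + X) * x ^ l) / (l ! : ℝ) := by
      exact div_le_div₀ (by positivity) hrpow hfac hGam'
    calc F (2 * k + j) ≤ ((1 + X) * x ^ l) / (l ! : ℝ) := this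
      _ = (1 + X) * h (j / k) := by rw [hh_def, hl_def]; ring
  -- summability over the product
  have hprod : Summable (fun p : ℕ × Fin k => h p.1) := by
    rw [summable_prod_of_nonneg (fun p => hhnonneg p.1)]
    refine ⟨fun a => .of_finite, ?_⟩
    have heq : ∀ a : ℕ, ∑' _ : Fin k, h a = (k : ℝ) * h a := by
      intro a
      rw [tsum_fintype]
      simp [Finset.sum_const, mul_comm]
    simpa only [heq] using hh_sum.mul_left (k : ℝ)
  have hHsum : Summable (fun j : ℕ => h (j / k)) := by
    have := (Nat.divModEquiv k).summable_iff.mpr hprod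
    simpa [Function.comp_def, Nat.divModEquiv] using this
  have htsum_eq : ∑' j : ℕ, h (j / k) = (k : ℝ) * ∑' l, h l := by
    have h1 : ∑' j : ℕ, h (j / k) = ∑' p : ℕ × Fin k, h p.1 := by
      rw [← (Nat.divModEquiv k).tsum_eq (fun p : ℕ × Fin k => h p.1)]
      simp [Nat.divModEquiv]
    rw [h1, Summable.tsum_prod' hprod fun a => .of_finite]
    rw [← tsum_mul_left]
    congr 1
    ext a
    rw [tsum_fintype]
    simp [Finset.sum_const, mul_comm]
  -- summability of F
  have htailsum : Summable (fun j : ℕ => F (j + 2 * k)) := by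
    refine Summable.of_nonneg_of_le (fun j => hFnonneg _) (fun j => ?_)
      (hHsum.mul_left (1 + X))
    rw [add_comm]
    exact htail j
  have hFsum : Summable F := (summable_nat_add_iff (2 * k)).mp htailsum
  have hnormsum : Summable (fun m : ℕ => ‖w ^ m / (Real.Gamma ((m + 1) / k) : ℂ)‖) := by
    simpa only [hnorm] using hFsum
  -- finite part bound
  have hfin : ∑ m ∈ Finset.range (2 * k), F m ≤ 4 * k * (1 + X) := by
    have hterm : ∀ m ∈ Finset.range (2 * k), F m ≤ 2 * (1 + X) := by
      intro m hm
      rw [Finset.mem_range] at hm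
      have ht0 : (0:ℝ) < ((m:ℝ) + 1) / k := by positivity
      have ht2 : ((m:ℝ) + 1) / k ≤ 2 := by
        rw [div_le_iff₀ hk0]
        have : (m:ℝ) + 1 ≤ 2 * k := by
          have : (m:ℝ) + 1 ≤ (2 * k : ℕ) := by exact_mod_cast hm
          push_cast at this
          linarith
        linarith
      have hG := aux_half_le_Gamma ht0 ht2
      have h1 : F m ≤ r ^ m / (1/2) := by
        apply div_le_div_of_nonneg_left (by positivity) (by norm_num) hG
      have h2 : r ^ m / (1/2 : ℝ) = 2 * r ^ m := by ring
      have h3 : r ^ m ≤ 1 + X := hpow m (by omega)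
      rw [h2] at h1
      linarith
    calc ∑ m ∈ Finset.range (2 * k), F m ≤ ∑ _m ∈ Finset.range (2 * k), 2 * (1 + X) :=
          Finset.sum_le_sum hterm
      _ = (2 * k : ℕ) * (2 * (1 + X)) := by rw [Finset.sum_const, Finset.card_range]; simp
      _ = 4 * k * (1 + X) := by push_cast; ring
  -- tail part bound
  have htailbound : ∑' j, F (j + 2 * k) ≤ (1 + X) * ((k : ℝ) * Real.exp x) := by
    calc ∑' j, F (j + 2 * k) ≤ ∑' j, (1 + X) * h (j / k) := by
          refine Summable.tsum_le_tsum (fun j => ?_) htailsum (hHsum.mul_left (1 + X))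
          rw [add_comm]
          exact htail j
      _ = (1 + X) * ∑' j, h (j / k) := tsum_mul_left
      _ = (1 + X) * ((k : ℝ) * ∑' l, h l) := by rw [htsum_eq]
      _ ≤ (1 + X) * ((k : ℝ) * Real.exp x) := by
          apply mul_le_mul_of_nonneg_left _ (by linarith)
          exact mul_le_mul_of_nonneg_left hh_tsum (by positivity)
  -- assemble
  have hE : 1 ≤ Real.exp x := by
    have := Real.add_one_le_exp x
    linarith
  calc ‖∑' m : ℕ, w ^ m / (Real.Gamma ((m + 1) / k) : ℂ)‖
      ≤ ∑' m : ℕ, ‖w ^ m / (Real.Gamma ((m + 1) / k) : ℂ)‖ := norm_tsum_le_tsum_norm hnormsum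
    _ = ∑' m : ℕ, F m := tsum_congr hnorm
    _ = ∑ m ∈ Finset.range (2 * k), F m + ∑' j, F (j + 2 * k) :=
        (hFsum.sum_add_tsum_nat_add (2 * k)).symm
    _ ≤ 4 * k * (1 + X) + (1 + X) * ((k : ℝ) * Real.exp x) := add_le_add hfin htailbound
    _ ≤ 6 * k * (1 + X) * Real.exp x := by
        have key : 4 + Real.exp x ≤ 6 * Real.exp x := by linarith
        nlinarith [mul_le_mul_of_nonneg_left key
          (mul_nonneg hk0.le (by linarith : (0:ℝ) ≤ 1 + X))]
end

section
/- Borel transform bound: suppose h(x) = Σ_{m=1}^∞ h_m x^m with |h_m| ≤ K T^{m−1} for all m ≥ 1 (K, T > 0). Then the Borel transform of order k, B_k(h)(w) = Σ_{m=1}^∞ (h_m/Γ(m/k)) w^{m−1}, defines an entire function satisfying |B_k(h)(w)| ≤ 6kK(1+T^{2k}|w|^{2k})e^{T^k|w|^k} for all w ∈ ℂ; consequently, for μ > 2^{1/k}·T we have sup_w |B_k(h)(w)|(1+μ^{2k}|w|^{2k})e^{-μ^k|w|^k} ≤ K·C_k with C_k = 384k·e^{-2−√15/2}(4+√15)². 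-/
open Real Complex

lemma exp_le_quad {x : ℝ} (hx : x ≤ 0) : Real.exp x ≤ 1 + x + x ^ 2 / 2 := by
  have key : Antitone (fun x : ℝ => 1 + x + x ^ 2 / 2 - Real.exp x) := by
    apply antitone_of_deriv_nonpos
    · fun_prop
    · intro y
      have hd : HasDerivAt (fun x : ℝ => 1 + x + x ^ 2 / 2 - Real.exp x)
          (0 + 1 + (↑2 * y ^ 1) / 2 - Real.exp y) y := by
        exact (((hasDerivAt_const y (1:ℝ)).add (hasDerivAt_id y)).add
          ((hasDerivAt_pow 2 y).div_const 2)).sub (Real.hasDerivAt_exp y)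
      rw [hd.deriv]
      have := Real.add_one_le_exp y
      push_cast
      nlinarith
  have h0 := key hx
  simp only [Real.exp_zero] at h0
  nlinarith

lemma cubic_le_exp {x : ℝ} (hx : x ≤ 0) : 1 + x + x ^ 2 / 2 + x ^ 3 / 6 ≤ Real.exp x := by
  have key : AntitoneOn (fun x : ℝ => Real.exp x - (1 + x + x ^ 2 / 2 + x ^ 3 / 6)) (Set.Iic 0) := by
    apply antitoneOn_of_deriv_nonpos (convex_Iic 0)
    · fun_prop
    · exact Differentiable.differentiableOn (by fun_prop)
    · intro y hy
      rw [interior_Iic] at hy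
      have hd : HasDerivAt (fun x : ℝ => Real.exp x - (1 + x + x ^ 2 / 2 + x ^ 3 / 6))
          (Real.exp y - (0 + 1 + (↑2 * y ^ 1) / 2 + (↑3 * y ^ 2) / 6)) y := by
        exact (Real.hasDerivAt_exp y).sub ((((hasDerivAt_const y (1:ℝ)).add (hasDerivAt_id y)).add
          ((hasDerivAt_pow 2 y).div_const 2)).add ((hasDerivAt_pow 3 y).div_const 6))
      rw [hd.deriv]
      have := exp_le_quad (le_of_lt hy)
      push_cast
      nlinarith
  have h0 := key (Set.mem_Iic.2 hx) (Set.mem_Iic.2 le_rfl) hx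
  simp only [Real.exp_zero] at h0
  nlinarith

lemma one_le_Gamma_of_le_one {a : ℝ} (h0 : 0 < a) (h1 : a ≤ 1) : 1 ≤ Real.Gamma a := by
  rcases eq_or_lt_of_le h1 with rfl | h1
  · simp [Real.Gamma_one]
  · have h2a : (0:ℝ) < 2 - a := by linarith
    have hc := Real.convexOn_Gamma.2 (Set.mem_Ioi.2 h0) (Set.mem_Ioi.2 (by norm_num : (0:ℝ) < 2))
      (show (0:ℝ) ≤ 1 / (2 - a) by positivity)
      (show (0:ℝ) ≤ (1 - a) / (2 - a) by apply div_nonneg <;> linarith)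
      (show 1 / (2 - a) + (1 - a) / (2 - a) = 1 by field_simp; ring)
    rw [show (1 / (2 - a)) • a + ((1 - a) / (2 - a)) • (2:ℝ) = 1 by
      simp only [smul_eq_mul]; field_simp; ring] at hc
    rw [Real.Gamma_one, Real.Gamma_two, smul_eq_mul, smul_eq_mul] at hc
    have hc' := mul_le_mul_of_nonneg_right hc (le_of_lt h2a)
    have e1 : 1 / (2 - a) * Real.Gamma a * (2 - a) = Real.Gamma a := by field_simp
    have e2 : (1 - a) / (2 - a) * 1 * (2 - a) = 1 - a := by field_simp
    rw [add_mul, e1, e2] at hc'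
    linarith

lemma one_le_Gamma_of_two_le {z : ℝ} (hz : 2 ≤ z) : 1 ≤ Real.Gamma z := by
  rcases eq_or_lt_of_le hz with rfl | hz
  · simp [Real.Gamma_two]
  · have hz1 : (0:ℝ) < z - 1 := by linarith
    have hc := Real.convexOn_Gamma.2 (Set.mem_Ioi.2 (by norm_num : (0:ℝ) < 1))
      (Set.mem_Ioi.2 (by linarith : (0:ℝ) < z))
      (show (0:ℝ) ≤ (z - 2) / (z - 1) by apply div_nonneg <;> linarith)
      (show (0:ℝ) ≤ 1 / (z - 1) by positivity)
      (show (z - 2) / (z - 1) + 1 / (z - 1) = 1 by field_simp; ring)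
    rw [show ((z - 2) / (z - 1)) • (1:ℝ) + (1 / (z - 1)) • z = 2 by
      simp only [smul_eq_mul]; field_simp; ring] at hc
    rw [Real.Gamma_one, Real.Gamma_two, smul_eq_mul, smul_eq_mul] at hc
    have hc' := mul_le_mul_of_nonneg_right hc (le_of_lt hz1)
    have e1 : (z - 2) / (z - 1) * 1 * (z - 1) = z - 2 := by field_simp
    have e2 : 1 / (z - 1) * Real.Gamma z * (z - 1) = Real.Gamma z := by field_simp
    rw [add_mul, e1, e2] at hc'
    linarith

lemma half_le_Gamma_add_one {a : ℝ} (h0 : 0 < a) (h1 : a ≤ 1) :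
    1 / 2 ≤ Real.Gamma (a + 1) := by
  have h2 : Real.Gamma (a + 1 + 1) = (a + 1) * Real.Gamma (a + 1) :=
    Real.Gamma_add_one (by linarith)
  have h3 : 1 ≤ Real.Gamma (a + 1 + 1) := one_le_Gamma_of_two_le (by linarith)
  nlinarith [Real.Gamma_pos_of_pos (show (0:ℝ) < a + 1 by linarith)]

lemma factorial_le_Gamma {a : ℝ} (h0 : 0 < a) (h1 : a ≤ 1) (q : ℕ) :
    (q.factorial : ℝ) / 2 ≤ Real.Gamma (a + (q + 1)) := by
  induction q with
  | zero => simpa using half_le_Gamma_add_one h0 h1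
  | succ n ih =>
    have harg : a + (↑(n + 1) + 1) = (a + (n + 1)) + 1 := by push_cast; ring
    rw [harg, Real.Gamma_add_one (by positivity)]
    have hfac : ((n + 1).factorial : ℝ) = (n + 1) * n.factorial := by
      rw [Nat.factorial_succ]; push_cast; ring
    rw [hfac]
    have hge : (n:ℝ) + 1 ≤ a + (n + 1) := by linarith
    have hpos : (0:ℝ) ≤ (n:ℝ) + 1 := by positivity
    calc ((n:ℝ) + 1) * n.factorial / 2 = ((n:ℝ) + 1) * (n.factorial / 2) := by ring
      _ ≤ (a + (n + 1)) * Real.Gamma (a + (n + 1)) := by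
          apply mul_le_mul hge ih (by positivity) (by linarith)

noncomputable def Gaux (y : ℝ) : ℕ → ℝ
  | 0 => 1
  | (q + 1) => 2 * y ^ (q + 1) / q.factorial

lemma Gaux_nonneg {y : ℝ} (hy : 0 ≤ y) (q : ℕ) : 0 ≤ Gaux y q := by
  cases q with
  | zero => norm_num [Gaux]
  | succ n => simp only [Gaux]; positivity

lemma Gaux_summable {y : ℝ} : Summable (Gaux y) := by
  rw [← summable_nat_add_iff 1]
  have : (fun q => Gaux y (q + 1)) = fun q => (2 * y) * (y ^ q / q.factorial) := by
    funext q; simp only [Gaux]; ring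
  rw [this]
  exact (Real.summable_pow_div_factorial y).mul_left (2 * y)

lemma Gaux_tsum_le {y : ℝ} (hy : 0 ≤ y) : ∑' q, Gaux y q ≤ 1 + 2 * y * Real.exp y := by
  rw [Summable.tsum_eq_zero_add Gaux_summable]
  have h1 : (fun q => Gaux y (q + 1)) = fun q => (2 * y) * (y ^ q / q.factorial) := by
    funext q; simp only [Gaux]; ring
  rw [h1, tsum_mul_left]
  have h2 : ∑' q : ℕ, y ^ q / q.factorial ≤ Real.exp y :=
    Real.tsum_le_of_sum_range_le (fun n => by positivity)
      (fun n => Real.sum_le_exp_of_nonneg hy n)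
  have h0 : Gaux y 0 = 1 := rfl
  rw [h0]
  have h3 : (0:ℝ) ≤ 2 * y := by linarith
  nlinarith

lemma term_bound (k : ℕ) (hk : 1 ≤ k) {X : ℝ} (hX : 0 ≤ X) (m : ℕ) :
    X ^ m / Real.Gamma (((m:ℝ) + 1) / k) ≤ (1 + X ^ k) * Gaux (X ^ k) (m / k) := by
  have hkR : (0:ℝ) < k := by exact_mod_cast Nat.pos_of_ne_zero (by omega)
  set y : ℝ := X ^ k with hy_def
  have hy : 0 ≤ y := by positivity
  set q := m / k with hq_def
  set r := m % k with hr_def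
  have hrk : r < k := Nat.mod_lt _ (by omega)
  have hm : k * q + r = m := Nat.div_add_mod m k
  set a : ℝ := ((r : ℝ) + 1) / k with ha_def
  have ha0 : 0 < a := by positivity
  have ha1 : a ≤ 1 := by
    rw [ha_def, div_le_one hkR]
    have : (r:ℝ) + 1 ≤ (k:ℝ) := by exact_mod_cast Nat.succ_le_of_lt hrk
    linarith
  have harg : ((m:ℝ) + 1) / (k:ℝ) = a + q := by
    rw [ha_def]
    field_simp
    push_cast [← hm]
    ring
  have hXm : X ^ m = y ^ q * X ^ r := by
    rw [hy_def, ← pow_mul, ← pow_add, hm]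
  have hXr : X ^ r ≤ 1 + y := by
    rcases le_total X 1 with hX1 | hX1
    · have : X ^ r ≤ 1 := pow_le_one₀ hX hX1
      linarith
    · have : X ^ r ≤ X ^ k := pow_le_pow_right₀ hX1 (le_of_lt hrk)
      rw [hy_def]; linarith
  rw [harg, hXm]
  rcases Nat.eq_zero_or_pos q with hq0 | hqpos
  · rw [hq0]
    have hΓ : 1 ≤ Real.Gamma (a + (0:ℕ)) := by
      simpa using one_le_Gamma_of_le_one ha0 ha1
    have hΓpos : 0 < Real.Gamma (a + (0:ℕ)) := by linarith
    have : Gaux y 0 = 1 := rfl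
    rw [this, mul_one]
    calc y ^ 0 * X ^ r / Real.Gamma (a + (0:ℕ)) = X ^ r / Real.Gamma (a + (0:ℕ)) := by
          rw [pow_zero, one_mul]
      _ ≤ X ^ r / 1 := by gcongr
      _ = X ^ r := div_one _
      _ ≤ 1 + y := hXr
  · obtain ⟨n, hqn⟩ : ∃ n, q = n + 1 := ⟨q - 1, by omega⟩
    rw [hqn]
    have hΓ := factorial_le_Gamma ha0 ha1 n
    have hfpos : (0:ℝ) < (n.factorial : ℝ) := by exact_mod_cast n.factorial_pos
    have hΓpos : 0 < Real.Gamma (a + ((n:ℝ) + 1)) := by linarith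
    have hcast : a + ((n + 1 : ℕ) : ℝ) = a + ((n:ℝ) + 1) := by push_cast; ring
    rw [hcast]
    have hG : Gaux y (n + 1) = 2 * y ^ (n + 1) / n.factorial := rfl
    rw [hG]
    rw [div_le_iff₀ hΓpos]
    calc y ^ (n + 1) * X ^ r ≤ y ^ (n + 1) * (1 + y) := by
          apply mul_le_mul_of_nonneg_left hXr (by positivity)
      _ = (1 + y) * (2 * y ^ (n + 1) / n.factorial) * ((n.factorial : ℝ) / 2) := by
          field_simp
      _ ≤ (1 + y) * (2 * y ^ (n + 1) / n.factorial) * Real.Gamma (a + ((n:ℝ) + 1)) := by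
          apply mul_le_mul_of_nonneg_left hΓ
          positivity

lemma div_summable (k : ℕ) (hk : 1 ≤ k) {y : ℝ} (hy : 0 ≤ y) :
    Summable (fun m => Gaux y (m / k)) ∧
      ∑' m : ℕ, Gaux y (m / k) ≤ k * (1 + 2 * y * Real.exp y) := by
  haveI : NeZero k := ⟨by omega⟩
  set e := (Nat.divModEquiv k).symm with he_def
  have hcomp : ∀ p : ℕ × Fin k, Gaux y ((e p) / k) = Gaux y p.1 := by
    rintro ⟨n, j⟩
    have : e (n, j) = n * k + (j : ℕ) := rfl
    rw [this]
    congr 1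
    have hj : (j : ℕ) < k := j.2
    rw [mul_comm, Nat.mul_add_div (by omega), Nat.div_eq_of_lt hj, add_zero]
  have hprod : Summable (fun p : ℕ × Fin k => Gaux y p.1) := by
    apply (summable_prod_of_nonneg ?_).2
    constructor
    · intro n; exact Summable.of_finite
    · have : (fun n : ℕ => ∑' _ : Fin k, Gaux y n) = fun n => (k : ℝ) * Gaux y n := by
        funext n
        rw [tsum_fintype]
        simp [Finset.sum_const, nsmul_eq_mul]
      rw [this]
      exact Gaux_summable.mul_left _
    · intro p; exact Gaux_nonneg hy _
  have hsum : Summable (fun m => Gaux y (m / k)) := by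
    have := (e.summable_iff (f := fun m => Gaux y (m / k))).1 ?_
    · exact this
    · have : ((fun m => Gaux y (m / k)) ∘ e) = fun p : ℕ × Fin k => Gaux y p.1 := by
        funext p; exact hcomp p
      rw [this]; exact hprod
  refine ⟨hsum, ?_⟩
  have h1 : ∑' m : ℕ, Gaux y (m / k) = ∑' p : ℕ × Fin k, Gaux y p.1 := by
    rw [← e.tsum_eq (f := fun m => Gaux y (m / k))]
    exact tsum_congr hcomp
  rw [h1, Summable.tsum_prod' hprod (fun n => Summable.of_finite)]
  have h2 : ∀ n : ℕ, ∑' _ : Fin k, Gaux y n = (k : ℝ) * Gaux y n := by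
    intro n
    rw [tsum_fintype]
    simp [Finset.sum_const, nsmul_eq_mul]
  calc (∑' n : ℕ, ∑' _ : Fin k, Gaux y n) = ∑' n : ℕ, (k:ℝ) * Gaux y n := tsum_congr h2
    _ = (k:ℝ) * ∑' n, Gaux y n := tsum_mul_left
    _ ≤ (k:ℝ) * (1 + 2 * y * Real.exp y) := by
        apply mul_le_mul_of_nonneg_left (Gaux_tsum_le hy)
        positivity



lemma main_bound (k : ℕ) (hk : 1 ≤ k) (K T : ℝ) (hK : 0 < K) (hT : 0 < T)
    (h : ℕ → ℂ) (hbound : ∀ m : ℕ, 1 ≤ m → ‖h m‖ ≤ K * T ^ (m - 1)) (w : ℂ) :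
    ‖∑' m : ℕ, h (m + 1) / (Real.Gamma ((m + 1) / k) : ℂ) * w ^ m‖
      ≤ 6 * k * K * (1 + T ^ (2 * k) * ‖w‖ ^ (2 * k)) * Real.exp (T ^ k * ‖w‖ ^ k) := by
  have hkR : (1:ℝ) ≤ k := by exact_mod_cast hk
  set X : ℝ := T * ‖w‖ with hX_def
  have hX : 0 ≤ X := by positivity
  set y : ℝ := X ^ k with hy_def
  have hy : 0 ≤ y := by positivity
  obtain ⟨hsum, htsum⟩ := div_summable k hk hy
  -- termwise bound on norms
  have hterm : ∀ m : ℕ, ‖h (m + 1) / (Real.Gamma ((m + 1) / k) : ℂ) * w ^ m‖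
      ≤ K * (1 + y) * Gaux y (m / k) := by
    intro m
    have hΓpos : 0 < Real.Gamma (((m:ℝ) + 1) / k) := by
      apply Real.Gamma_pos_of_pos; positivity
    have hnorm : ‖h (m + 1) / (Real.Gamma ((m + 1) / k) : ℂ) * w ^ m‖
        = ‖h (m + 1)‖ / Real.Gamma (((m:ℝ) + 1) / k) * ‖w‖ ^ m := by
      rw [norm_mul, norm_div, norm_pow, Complex.norm_real, Real.norm_eq_abs, abs_of_pos hΓpos]
    rw [hnorm]
    have hh : ‖h (m + 1)‖ ≤ K * T ^ m := by
      have := hbound (m + 1) (by omega)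
      simpa using this
    calc ‖h (m + 1)‖ / Real.Gamma (((m:ℝ) + 1) / k) * ‖w‖ ^ m
        ≤ K * T ^ m / Real.Gamma (((m:ℝ) + 1) / k) * ‖w‖ ^ m := by
          gcongr
      _ = K * (X ^ m / Real.Gamma (((m:ℝ) + 1) / k)) := by
          rw [hX_def, mul_pow]; ring
      _ ≤ K * ((1 + y) * Gaux y (m / k)) := by
          have := term_bound k hk hX m
          rw [← hy_def] at this
          exact mul_le_mul_of_nonneg_left this (le_of_lt hK)
      _ = K * (1 + y) * Gaux y (m / k) := by ring
  -- sum up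
  have hmaj : Summable (fun m : ℕ => K * (1 + y) * Gaux y (m / k)) := hsum.mul_left _
  have hns : ‖∑' m : ℕ, h (m + 1) / (Real.Gamma ((m + 1) / k) : ℂ) * w ^ m‖
      ≤ ∑' m : ℕ, K * (1 + y) * Gaux y (m / k) :=
    tsum_of_norm_bounded hmaj.hasSum hterm
  have hts : ∑' m : ℕ, K * (1 + y) * Gaux y (m / k) ≤ K * (1 + y) * (k * (1 + 2 * y * Real.exp y)) := by
    rw [tsum_mul_left]
    apply mul_le_mul_of_nonneg_left htsum (by positivity)
  have hfin : K * (1 + y) * (k * (1 + 2 * y * Real.exp y))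
      ≤ 6 * k * K * (1 + y ^ 2) * Real.exp y := by
    have hE : 1 ≤ Real.exp y := Real.one_le_exp hy
    have key : (1 + y) * (1 + 2 * y * Real.exp y) ≤ 6 * (1 + y ^ 2) * Real.exp y := by
      nlinarith [sq_nonneg (y - 1), mul_nonneg hy (le_trans zero_le_one hE),
        mul_nonneg (mul_nonneg hy hy) (le_trans zero_le_one hE)]
    calc K * (1 + y) * (k * (1 + 2 * y * Real.exp y))
        = (k * K) * ((1 + y) * (1 + 2 * y * Real.exp y)) := by ring
      _ ≤ (k * K) * (6 * (1 + y ^ 2) * Real.exp y) := by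
          apply mul_le_mul_of_nonneg_left key (by positivity)
      _ = 6 * k * K * (1 + y ^ 2) * Real.exp y := by ring
  have hy_eq : y = T ^ k * ‖w‖ ^ k := by rw [hy_def, hX_def, mul_pow]
  have hy2 : y ^ 2 = T ^ (2 * k) * ‖w‖ ^ (2 * k) := by
    rw [hy_eq, show 2 * k = k * 2 from mul_comm 2 k, pow_mul, pow_mul]
    ring
  rw [← hy_eq, ← hy2]
  linarith

lemma key_t {t : ℝ} (ht : 0 ≤ t) :
    1 + t ^ 2 ≤ 8 * (4 + Real.sqrt 15) * Real.exp ((t - (4 + Real.sqrt 15)) / 4) := by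
  set s := Real.sqrt 15 with hs_def
  have hs : s ^ 2 = 15 := Real.sq_sqrt (by norm_num)
  have hs3 : 23 / 6 ≤ s := by
    rw [hs_def]
    rw [show (23:ℝ)/6 = Real.sqrt ((23/6)^2) by rw [Real.sqrt_sq]; norm_num]
    apply Real.sqrt_le_sqrt; norm_num
  have hs4 : s ≤ 4 := by
    rw [hs_def]
    rw [show (4:ℝ) = Real.sqrt 16 by rw [show (16:ℝ) = 4^2 by norm_num, Real.sqrt_sq]; norm_num]
    apply Real.sqrt_le_sqrt; norm_num
  rcases le_or_gt t 2 with h2 | h2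
  · -- t ≤ 2 : numeric
    have he2 : Real.exp (-2) ≤ Real.exp ((t - (4 + s)) / 4) := by
      apply Real.exp_le_exp.2; nlinarith
    have h8 : Real.exp 2 ≤ 8 := by
      have h1 := Real.exp_one_lt_d9
      calc Real.exp 2 = (Real.exp 1) ^ 2 := by rw [← Real.exp_nat_mul]; norm_num
        _ ≤ 2.7182818286 ^ 2 := by nlinarith [Real.exp_pos 1]
        _ ≤ 8 := by norm_num
    have hinv : (1:ℝ) / 8 ≤ Real.exp (-2) := by
      rw [Real.exp_neg]
      rw [div_le_iff₀ (by norm_num)]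
      rw [inv_mul_eq_div, le_div_iff₀ (Real.exp_pos 2)]
      linarith
    nlinarith [Real.exp_pos ((t - (4 + s)) / 4)]
  rcases le_or_gt t (4 + s) with h3 | h3
  · -- 2 < t ≤ 4 + s : cubic bound
    set x := (t - (4 + s)) / 4 with hx_def
    have hx : x ≤ 0 := by rw [hx_def]; linarith
    have hcub := cubic_le_exp hx
    have hlin : 0 ≤ 12 * s + (4 + s) * (t - 4 - s) := by nlinarith
    have hpoly : 1 + t ^ 2 ≤ 8 * (4 + s) * (1 + x + x ^ 2 / 2 + x ^ 3 / 6) := by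
      rw [hx_def]
      nlinarith [mul_nonneg (sq_nonneg (t - 4 - s)) hlin]
    nlinarith
  · -- t > 4 + s : quadratic bound
    set x := (t - (4 + s)) / 4 with hx_def
    have hx : 0 ≤ x := by rw [hx_def]; linarith
    have hquad := Real.quadratic_le_exp_of_nonneg hx
    have hpoly : 1 + t ^ 2 ≤ 8 * (4 + s) * (1 + x + x ^ 2 / 2) := by
      rw [hx_def]
      nlinarith [mul_nonneg (by linarith : (0:ℝ) ≤ s) (sq_nonneg (t - 4 - s))]
    nlinarith

lemma key_weight {t : ℝ} (ht : 0 ≤ t) :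
    (1 + t ^ 2) ^ 2 * Real.exp (-(t / 2)) ≤
      64 * (4 + Real.sqrt 15) ^ 2 * Real.exp (-2 - Real.sqrt 15 / 2) := by
  set s := Real.sqrt 15 with hs_def
  have hsnn : 0 ≤ s := Real.sqrt_nonneg 15
  have h1 := key_t ht
  have hnn : (0:ℝ) ≤ 1 + t ^ 2 := by positivity
  have hsq : (1 + t ^ 2) ^ 2 ≤ (8 * (4 + s)) ^ 2 * Real.exp ((t - (4 + s)) / 4) ^ 2 := by
    calc (1 + t ^ 2) ^ 2 ≤ (8 * (4 + s) * Real.exp ((t - (4 + s)) / 4)) ^ 2 := by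
          apply pow_le_pow_left₀ hnn h1
      _ = (8 * (4 + s)) ^ 2 * Real.exp ((t - (4 + s)) / 4) ^ 2 := by ring
  have hexp : Real.exp ((t - (4 + s)) / 4) ^ 2 * Real.exp (-(t / 2)) =
      Real.exp (-2 - s / 2) := by
    rw [← Real.exp_nat_mul, ← Real.exp_add]
    congr 1; push_cast; ring
  calc (1 + t ^ 2) ^ 2 * Real.exp (-(t / 2))
      ≤ (8 * (4 + s)) ^ 2 * Real.exp ((t - (4 + s)) / 4) ^ 2 * Real.exp (-(t / 2)) := by
        exact mul_le_mul_of_nonneg_right hsq (le_of_lt (Real.exp_pos _))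
    _ = 64 * (4 + s) ^ 2 * (Real.exp ((t - (4 + s)) / 4) ^ 2 * Real.exp (-(t / 2))) := by ring
    _ = 64 * (4 + s) ^ 2 * Real.exp (-2 - s / 2) := by rw [hexp]

/-- Borel transform bound: if `h(x) = Σ_{m≥1} h_m x^m` with `|h_m| ≤ K T^(m−1)`, then the
order-`k` Borel transform `B_k(h)(w) = Σ_{m≥1} h_m w^(m−1)/Γ(m/k)` satisfies
`|B_k(h)(w)| ≤ 6kK(1+T^(2k)|w|^(2k)) e^(T^k|w|^k)`, and for `μ > 2^(1/k) T` the weighted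
norm bound `|B_k(h)(w)|(1+μ^(2k)|w|^(2k)) e^(-μ^k|w|^k) ≤ K C_k` holds, with
`C_k = 384 k e^(-2−√15/2)(4+√15)²`. -/
theorem stmt_15 (k : ℕ) (hk : 1 ≤ k) (K T : ℝ) (hK : 0 < K) (hT : 0 < T)
    (h : ℕ → ℂ) (hbound : ∀ m : ℕ, 1 ≤ m → ‖h m‖ ≤ K * T ^ (m - 1)) :
    (∀ w : ℂ,
      ‖∑' m : ℕ, h (m + 1) / (Real.Gamma ((m + 1) / k) : ℂ) * w ^ m‖
        ≤ 6 * k * K * (1 + T ^ (2 * k) * ‖w‖ ^ (2 * k)) * Real.exp (T ^ k * ‖w‖ ^ k)) ∧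
    ∀ μ : ℝ, (2 : ℝ) ^ ((1 : ℝ) / k) * T < μ →
      ∀ w : ℂ,
        ‖∑' m : ℕ, h (m + 1) / (Real.Gamma ((m + 1) / k) : ℂ) * w ^ m‖
            * (1 + μ ^ (2 * k) * ‖w‖ ^ (2 * k)) * Real.exp (-(μ ^ k * ‖w‖ ^ k))
          ≤ K * (384 * k * Real.exp (-2 - Real.sqrt 15 / 2) * (4 + Real.sqrt 15) ^ 2) := by
  refine ⟨main_bound k hk K T hK hT h hbound, ?_⟩
  intro μ hμ w
  have hkR : (1:ℝ) ≤ (k:ℝ) := by exact_mod_cast hk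
  have h2k : ((2:ℝ) ^ ((1:ℝ) / k)) ^ k = 2 := by
    rw [← Real.rpow_natCast ((2:ℝ) ^ ((1:ℝ)/k)) k, ← Real.rpow_mul (by norm_num)]
    rw [show (1:ℝ) / k * k = 1 by field_simp]
    exact Real.rpow_one 2
  have hbase : (0:ℝ) < (2:ℝ) ^ ((1:ℝ) / k) := Real.rpow_pos_of_pos (by norm_num) _
  have hμpos : 0 < μ := lt_trans (by positivity) hμ
  have hab : 2 * T ^ k < μ ^ k := by
    calc 2 * T ^ k = ((2:ℝ) ^ ((1:ℝ) / k)) ^ k * T ^ k := by rw [h2k]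
      _ = ((2:ℝ) ^ ((1:ℝ) / k) * T) ^ k := by rw [mul_pow]
      _ < μ ^ k := by
          apply pow_lt_pow_left₀ hμ (by positivity)
          omega
  set u : ℝ := ‖w‖ ^ k with hu_def
  have hu : 0 ≤ u := by positivity
  set a : ℝ := T ^ k with ha_def
  set b : ℝ := μ ^ k with hb_def
  have ha : 0 < a := by positivity
  have hb : 0 < b := by positivity
  set t : ℝ := b * u with ht_def
  have ht : 0 ≤ t := by positivity
  have hN := main_bound k hk K T hK hT h hbound w
  set N := ‖∑' m : ℕ, h (m + 1) / (Real.Gamma ((m + 1) / k) : ℂ) * w ^ m‖ with hN_def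
  have hNnn : 0 ≤ N := norm_nonneg _
  -- rewrite powers
  have hT2k : T ^ (2 * k) * ‖w‖ ^ (2 * k) = (a * u) ^ 2 := by
    rw [ha_def, hu_def, show 2 * k = k * 2 from mul_comm 2 k, pow_mul, pow_mul]; ring
  have hμ2k : μ ^ (2 * k) * ‖w‖ ^ (2 * k) = t ^ 2 := by
    rw [ht_def, hb_def, hu_def, show 2 * k = k * 2 from mul_comm 2 k, pow_mul, pow_mul]; ring
  have hexp1 : T ^ k * ‖w‖ ^ k = a * u := rfl
  have hexp2 : μ ^ k * ‖w‖ ^ k = t := rfl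
  rw [hμ2k]
  rw [hT2k, hexp1] at hN
  -- au ≤ t/2
  have hau : a * u ≤ t / 2 := by
    rw [ht_def]
    rcases eq_or_lt_of_le hu with hu0 | hu0
    · rw [← hu0]; ring_nf; positivity
    · nlinarith
  have hau2 : (a * u) ^ 2 ≤ t ^ 2 := by nlinarith [mul_nonneg (le_of_lt ha) hu]
  have hN2 : N ≤ 6 * k * K * (1 + t ^ 2) * Real.exp (t / 2) := by
    calc N ≤ 6 * k * K * (1 + (a * u) ^ 2) * Real.exp (a * u) := hN
      _ ≤ 6 * k * K * (1 + t ^ 2) * Real.exp (t / 2) := by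
          have h1 : (1 + (a*u)^2) ≤ 1 + t ^ 2 := by linarith
          have h2 : Real.exp (a * u) ≤ Real.exp (t / 2) := Real.exp_le_exp.2 hau
          have hc : (0:ℝ) ≤ 6 * k * K := by positivity
          calc 6 * k * K * (1 + (a * u) ^ 2) * Real.exp (a * u)
              ≤ 6 * k * K * (1 + t ^ 2) * Real.exp (a * u) := by
                apply mul_le_mul_of_nonneg_right _ (le_of_lt (Real.exp_pos _))
                apply mul_le_mul_of_nonneg_left h1 hc
            _ ≤ 6 * k * K * (1 + t ^ 2) * Real.exp (t / 2) := by
                apply mul_le_mul_of_nonneg_left h2 (by positivity)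
  have hw : 0 ≤ 1 + t ^ 2 := by positivity
  calc N * (1 + t ^ 2) * Real.exp (-t)
      ≤ (6 * k * K * (1 + t ^ 2) * Real.exp (t / 2)) * (1 + t ^ 2) * Real.exp (-t) := by
        apply mul_le_mul_of_nonneg_right _ (le_of_lt (Real.exp_pos _))
        exact mul_le_mul_of_nonneg_right hN2 hw
    _ = 6 * k * K * ((1 + t ^ 2) ^ 2 * (Real.exp (t / 2) * Real.exp (-t))) := by ring
    _ = 6 * k * K * ((1 + t ^ 2) ^ 2 * Real.exp (-(t / 2))) := by
        rw [show Real.exp (t / 2) * Real.exp (-t) = Real.exp (-(t / 2)) by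
          rw [← Real.exp_add]; congr 1; ring]
    _ ≤ 6 * k * K * (64 * (4 + Real.sqrt 15) ^ 2 * Real.exp (-2 - Real.sqrt 15 / 2)) := by
        apply mul_le_mul_of_nonneg_left (key_weight ht) (by positivity)
    _ = K * (384 * k * Real.exp (-2 - Real.sqrt 15 / 2) * (4 + Real.sqrt 15) ^ 2) := by ring
end
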